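/- For i ∈ {1,2}, let lp_i be a coherent conditional lower prevision on C_i ⊆ C(X_i) with natural extension E_i to C(X_i), and let 𝔅_i ⊆ P_∅(X_i). Then for all {i,j} = {1,2}, all gambles f_i on X_i, all B_i ∈ P_∅(X_i) and all B_j ∈ 𝔅_j: (lp1⊗lp2)(f_i | B_i ∩ B_j) = (lp1⊗lp2)(f_i | B_i) = E_i(f_i | B_i), where f_i is identified with its cylindrical extension and B_i ∩ B_j denotes the product event B_i × B_j (reading the factors in the appropriate order). -/

import Mathlib

open scoped BigOperators

namespace IPaper

variable {X : Type*}

/-- A gamble on `X`: a bounded real-valued function. -/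
def IsGamble (f : X → ℝ) : Prop := ∃ M : ℝ, ∀ x, |f x| ≤ M

/-- The indicator gamble of an event. -/
noncomputable def ind (B : Set X) : X → ℝ := Set.indicator B 1

/-- The set `G_{>0}(X)` of nonnegative nonzero gambles. -/
def Gpos (X : Type*) : Set (X → ℝ) := {f | IsGamble f ∧ 0 ≤ f ∧ f ≠ 0}

/-- A coherent set of desirable gambles. -/
structure CoherentSDG (D : Set (X → ℝ)) : Prop where
  subset_gambles : ∀ f ∈ D, IsGamble f
  d1 : ∀ f : X → ℝ, IsGamble f → 0 ≤ f → f ≠ 0 → f ∈ D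
  d2 : ∀ f ∈ D, ∀ l : ℝ, 0 < l → l • f ∈ D
  d3 : ∀ f ∈ D, ∀ g ∈ D, f + g ∈ D
  d4 : ∀ f : X → ℝ, f ≤ 0 → f ∉ D

/-- `posi A`: positive linear hull of `A`. -/
def posi (A : Set (X → ℝ)) : Set (X → ℝ) :=
  {g | ∃ (n : ℕ) (l : Fin (n + 1) → ℝ) (h : Fin (n + 1) → X → ℝ),
    (∀ i, 0 < l i) ∧ (∀ i, h i ∈ A) ∧ g = ∑ i, l i • h i}

/-- `E(A) := posi (A ∪ G_{>0}(X))`. -/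
def natExtSet (A : Set (X → ℝ)) : Set (X → ℝ) := posi (A ∪ Gpos X)

/-- `C(X)`: all pairs of a gamble and a nonempty event. -/
def domC (X : Type*) : Set ((X → ℝ) × Set X) := {p | IsGamble p.1 ∧ p.2.Nonempty}

/-- The conditional lower prevision `lp_D` derived from a set of gambles `D`. -/
noncomputable def lpOf (D : Set (X → ℝ)) (f : X → ℝ) (B : Set X) : EReal :=
  sSup (Real.toEReal '' {m : ℝ | (fun x => (f x - m) * ind B x) ∈ D})

/-- Coherence (Williams) of a conditional lower prevision on a domain `C`. -/
def Coherent (C : Set ((X → ℝ) × Set X)) (lp : (X → ℝ) → Set X → EReal) : Prop :=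
  ∃ D : Set (X → ℝ), CoherentSDG D ∧ ∀ p ∈ C, lp p.1 p.2 = lpOf D p.1 p.2

/-- The set `A_lp`. -/
def Alp (C : Set ((X → ℝ) × Set X)) (lp : (X → ℝ) → Set X → EReal) : Set (X → ℝ) :=
  {g | ∃ p ∈ C, ∃ m : ℝ, (m : EReal) < lp p.1 p.2 ∧ g = fun x => (p.1 x - m) * ind p.2 x}

/-- `E(lp) := E(A_lp)`. -/
def ElpSet (C : Set ((X → ℝ) × Set X)) (lp : (X → ℝ) → Set X → EReal) : Set (X → ℝ) :=
  natExtSet (Alp C lp)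

/-- The natural extension of `lp` to all of `C(X)`. -/
noncomputable def natExtLP (C : Set ((X → ℝ) × Set X)) (lp : (X → ℝ) → Set X → EReal)
    (f : X → ℝ) (B : Set X) : EReal :=
  lpOf (ElpSet C lp) f B

/-- Simple `B`-measurable gamble. -/
def SimpleMeas (Bfam : Set (Set X)) (g : X → ℝ) : Prop :=
  ∃ (c0 : ℝ) (n : ℕ) (c : Fin n → ℝ) (Bs : Fin n → Set X),
    0 ≤ c0 ∧ (∀ i, 0 ≤ c i) ∧ (∀ i, Bs i ∈ Bfam) ∧
    g = fun x => c0 + ∑ i, c i * ind (Bs i) x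

/-- `B`-measurable gamble: uniform limit of nonnegative simple `B`-measurable gambles. -/
def BMeas (Bfam : Set (Set X)) (g : X → ℝ) : Prop :=
  ∃ gs : ℕ → X → ℝ, (∀ n, 0 ≤ gs n ∧ SimpleMeas Bfam (gs n)) ∧
    TendstoUniformly gs g Filter.atTop

/-- A conditional linear prevision on `C(X)`: a coherent self-conjugate conditional
lower prevision on the full domain. -/
def CondLinPrev (P : (X → ℝ) → Set X → EReal) : Prop :=
  Coherent (domC X) P ∧ ∀ p ∈ domC X, P p.1 p.2 = -P (-p.1) p.2

section Product

variable {X1 X2 : Type*}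

/-- `A_{1→2}`. -/
def A12 (D2 : Set (X2 → ℝ)) (F1 : Set (Set X1)) : Set (X1 × X2 → ℝ) :=
  {g | ∃ f2 ∈ D2, ∃ B1 ∈ F1 ∪ {Set.univ}, g = fun p => f2 p.2 * ind B1 p.1}

/-- `A_{2→1}`. -/
def A21 (D1 : Set (X1 → ℝ)) (F2 : Set (Set X2)) : Set (X1 × X2 → ℝ) :=
  {g | ∃ f1 ∈ D1, ∃ B2 ∈ F2 ∪ {Set.univ}, g = fun p => f1 p.1 * ind B2 p.2}

/-- `D1 ⊗ D2`, relative to the families of conditioning events `F1`, `F2`. -/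
def indNatExt (D1 : Set (X1 → ℝ)) (D2 : Set (X2 → ℝ))
    (F1 : Set (Set X1)) (F2 : Set (Set X2)) : Set (X1 × X2 → ℝ) :=
  natExtSet (A12 D2 F1 ∪ A21 D1 F2)

/-- `marg_1(D)`. -/
def marg1 (D : Set (X1 × X2 → ℝ)) : Set (X1 → ℝ) :=
  {f | IsGamble f ∧ (fun p : X1 × X2 => f p.1) ∈ D}

/-- `marg_2(D)`. -/
def marg2 (D : Set (X1 × X2 → ℝ)) : Set (X2 → ℝ) :=
  {f | IsGamble f ∧ (fun p : X1 × X2 => f p.2) ∈ D}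

/-- `marg_1(D|B2)`. -/
def marg1c (D : Set (X1 × X2 → ℝ)) (B2 : Set X2) : Set (X1 → ℝ) :=
  {f | IsGamble f ∧ (fun p : X1 × X2 => f p.1 * ind B2 p.2) ∈ D}

/-- `marg_2(D|B1)`. -/
def marg2c (D : Set (X1 × X2 → ℝ)) (B1 : Set X1) : Set (X2 → ℝ) :=
  {f | IsGamble f ∧ (fun p : X1 × X2 => f p.2 * ind B1 p.1) ∈ D}

/-- Epistemic independence of a set of desirable gambles on `X1 × X2`. -/
def EpIndSDG (F1 : Set (Set X1)) (F2 : Set (Set X2)) (D : Set (X1 × X2 → ℝ)) : Prop :=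
  (∀ B2 ∈ F2, marg1c D B2 = marg1 D) ∧ (∀ B1 ∈ F1, marg2c D B1 = marg2 D)

/-- Independent product (of sets of desirable gambles). -/
def IndProductSDG (F1 : Set (Set X1)) (F2 : Set (Set X2))
    (D1 : Set (X1 → ℝ)) (D2 : Set (X2 → ℝ)) (D : Set (X1 × X2 → ℝ)) : Prop :=
  CoherentSDG D ∧ EpIndSDG F1 F2 D ∧ marg1 D = D1 ∧ marg2 D = D2

/-- The independent natural extension `lp1 ⊗ lp2` on `C(X1 × X2)`. -/
noncomputable def lpProd (C1 : Set ((X1 → ℝ) × Set X1)) (lp1 : (X1 → ℝ) → Set X1 → EReal)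
    (C2 : Set ((X2 → ℝ) × Set X2)) (lp2 : (X2 → ℝ) → Set X2 → EReal)
    (F1 : Set (Set X1)) (F2 : Set (Set X2)) :
    (X1 × X2 → ℝ) → Set (X1 × X2) → EReal :=
  lpOf (indNatExt (ElpSet C1 lp1) (ElpSet C2 lp2) F1 F2)

/-- An independent domain `C ⊆ C(X1 × X2)`. -/
def IndepDomain (F1 : Set (Set X1)) (F2 : Set (Set X2))
    (C : Set ((X1 × X2 → ℝ) × Set (X1 × X2))) : Prop :=
  (∀ (f1 : X1 → ℝ) (B1 : Set X1), IsGamble f1 → B1.Nonempty → ∀ B2 ∈ F2,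
    (((fun p : X1 × X2 => f1 p.1), B1 ×ˢ (Set.univ : Set X2)) ∈ C ↔
      ((fun p : X1 × X2 => f1 p.1), B1 ×ˢ B2) ∈ C)) ∧
  (∀ (f2 : X2 → ℝ) (B2 : Set X2), IsGamble f2 → B2.Nonempty → ∀ B1 ∈ F1,
    (((fun p : X1 × X2 => f2 p.2), (Set.univ : Set X1) ×ˢ B2) ∈ C ↔
      ((fun p : X1 × X2 => f2 p.2), B1 ×ˢ B2) ∈ C))

/-- Epistemic independence of a conditional lower prevision on a domain `C`. -/
def EpIndLP (F1 : Set (Set X1)) (F2 : Set (Set X2))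
    (C : Set ((X1 × X2 → ℝ) × Set (X1 × X2)))
    (lp : (X1 × X2 → ℝ) → Set (X1 × X2) → EReal) : Prop :=
  (∀ (f1 : X1 → ℝ) (B1 : Set X1), IsGamble f1 → B1.Nonempty →
    ((fun p : X1 × X2 => f1 p.1), B1 ×ˢ (Set.univ : Set X2)) ∈ C → ∀ B2 ∈ F2,
    lp (fun p : X1 × X2 => f1 p.1) (B1 ×ˢ (Set.univ : Set X2)) =
      lp (fun p : X1 × X2 => f1 p.1) (B1 ×ˢ B2)) ∧
  (∀ (f2 : X2 → ℝ) (B2 : Set X2), IsGamble f2 → B2.Nonempty →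
    ((fun p : X1 × X2 => f2 p.2), (Set.univ : Set X1) ×ˢ B2) ∈ C → ∀ B1 ∈ F1,
    lp (fun p : X1 × X2 => f2 p.2) ((Set.univ : Set X1) ×ˢ B2) =
      lp (fun p : X1 × X2 => f2 p.2) (B1 ×ˢ B2))

/-- Independent product of two conditional lower previsions, on the joint domain `C`. -/
def IndProductLP (F1 : Set (Set X1)) (F2 : Set (Set X2))
    (C1 : Set ((X1 → ℝ) × Set X1)) (lp1 : (X1 → ℝ) → Set X1 → EReal)
    (C2 : Set ((X2 → ℝ) × Set X2)) (lp2 : (X2 → ℝ) → Set X2 → EReal)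
    (C : Set ((X1 × X2 → ℝ) × Set (X1 × X2)))
    (lp : (X1 × X2 → ℝ) → Set (X1 × X2) → EReal) : Prop :=
  Coherent C lp ∧ EpIndLP F1 F2 C lp ∧
  (∀ p ∈ C1, lp (fun q : X1 × X2 => p.1 q.1) (p.2 ×ˢ (Set.univ : Set X2)) = lp1 p.1 p.2) ∧
  (∀ p ∈ C2, lp (fun q : X1 × X2 => p.1 q.2) ((Set.univ : Set X1) ×ˢ p.2) = lp2 p.1 p.2)

end Product



/-! ### Auxiliary machinery -/

section AuxBasic
variable {W : Type*}

lemma isGamble_const (c : ℝ) : IsGamble (fun _ : W => c) := ⟨|c|, fun _ => le_rfl⟩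

lemma isGamble_zero : IsGamble (fun _ : W => (0:ℝ)) := ⟨0, fun _ => by simp⟩

lemma IsGamble.addf {f g : W → ℝ} (hf : IsGamble f) (hg : IsGamble g) :
    IsGamble (fun x => f x + g x) := by
  obtain ⟨M, hM⟩ := hf; obtain ⟨N, hN⟩ := hg
  exact ⟨M + N, fun x => (abs_add_le _ _).trans (add_le_add (hM x) (hN x))⟩

lemma IsGamble.mulc {f : W → ℝ} (hf : IsGamble f) (c : ℝ) :
    IsGamble (fun x => c * f x) := by
  obtain ⟨M, hM⟩ := hf
  exact ⟨|c| * M, fun x => by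
    rw [abs_mul]; exact mul_le_mul_of_nonneg_left (hM x) (abs_nonneg c)⟩

lemma IsGamble.subf {f g : W → ℝ} (hf : IsGamble f) (hg : IsGamble g) :
    IsGamble (fun x => f x - g x) := by
  have h := hf.addf (hg.mulc (-1))
  have : (fun x => f x + -1 * g x) = (fun x => f x - g x) := by funext x; ring
  rwa [this] at h

lemma IsGamble.mulf {f g : W → ℝ} (hf : IsGamble f) (hg : IsGamble g) :
    IsGamble (fun x => f x * g x) := by
  obtain ⟨M, hM⟩ := hf; obtain ⟨N, hN⟩ := hg
  exact ⟨M * N, fun x => by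
    rw [abs_mul]
    exact mul_le_mul (hM x) (hN x) (abs_nonneg _) ((abs_nonneg _).trans (hM x))⟩

lemma isGamble_sum {ι : Type*} (s : Finset ι) (f : ι → W → ℝ)
    (h : ∀ i ∈ s, IsGamble (f i)) : IsGamble (fun x => ∑ i ∈ s, f i x) := by
  classical
  induction s using Finset.induction_on with
  | empty => simpa using isGamble_zero
  | @insert a s ha ih =>
    have h1 : IsGamble (fun x => f a x + ∑ i ∈ s, f i x) :=
      (h a (Finset.mem_insert_self a s)).addf (ih fun i hi => h i (Finset.mem_insert_of_mem hi))
    have : (fun x => ∑ i ∈ insert a s, f i x) = (fun x => f a x + ∑ i ∈ s, f i x) := by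
      funext x; rw [Finset.sum_insert ha]
    rwa [this]

lemma ind_nonneg (B : Set W) (x : W) : 0 ≤ ind B x := by
  unfold ind; by_cases h : x ∈ B <;> simp [h]

lemma ind_le_one (B : Set W) (x : W) : ind B x ≤ 1 := by
  unfold ind; by_cases h : x ∈ B <;> simp [h]

lemma ind_of_mem {B : Set W} {x : W} (h : x ∈ B) : ind B x = 1 := by simp [ind, h]

lemma ind_of_not_mem {B : Set W} {x : W} (h : x ∉ B) : ind B x = 0 := by simp [ind, h]

lemma isGamble_ind (B : Set W) : IsGamble (ind B) :=
  ⟨1, fun x => by rw [abs_of_nonneg (ind_nonneg _ _)]; exact ind_le_one _ _⟩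

lemma ind_prod {W1 W2 : Type*} (B1 : Set W1) (B2 : Set W2) (p : W1 × W2) :
    ind (B1 ×ˢ B2) p = ind B1 p.1 * ind B2 p.2 := by
  by_cases h1 : p.1 ∈ B1 <;> by_cases h2 : p.2 ∈ B2 <;>
    simp [ind, Set.indicator_apply, Set.mem_prod, h1, h2]

lemma mem_posi_of_mem {A : Set (W → ℝ)} {h : W → ℝ} (hh : h ∈ A) : h ∈ posi A :=
  ⟨0, fun _ => 1, fun _ => h, fun _ => one_pos, fun _ => hh, by simp⟩

lemma mem_posi_smul {A : Set (W → ℝ)} {g : W → ℝ} (hg : g ∈ posi A) {c : ℝ} (hc : 0 < c) :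
    c • g ∈ posi A := by
  obtain ⟨n, l, h, hl, hmem, rfl⟩ := hg
  exact ⟨n, fun i => c * l i, h, fun i => mul_pos hc (hl i), hmem, by
    rw [Finset.smul_sum]; exact Finset.sum_congr rfl fun i _ => by rw [smul_smul]⟩

lemma mem_posi_add_single {A : Set (W → ℝ)} {p : W → ℝ} (hp : p ∈ posi A)
    {c : ℝ} (hc : 0 < c) {h : W → ℝ} (hh : h ∈ A) : p + c • h ∈ posi A := by
  obtain ⟨n, l, f, hl, hmem, rfl⟩ := hp
  refine ⟨n + 1, Fin.snoc l c, Fin.snoc f h, ?_, ?_, ?_⟩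
  · intro i
    refine Fin.lastCases ?_ ?_ i
    · simpa using hc
    · intro j; simpa using hl j
  · intro i
    refine Fin.lastCases ?_ ?_ i
    · rw [Fin.snoc_last]; exact hh
    · intro j; rw [Fin.snoc_castSucc]; exact hmem j
  · conv_rhs => rw [Fin.sum_univ_castSucc]
    simp [Fin.snoc_castSucc, Fin.snoc_last]

lemma sum_mem_posi_add {A : Set (W → ℝ)} {g : W → ℝ} (hg : g ∈ posi A) :
    ∀ (n : ℕ) (l : Fin (n+1) → ℝ) (f : Fin (n+1) → W → ℝ),
      (∀ i, 0 < l i) → (∀ i, f i ∈ A) → g + ∑ i, l i • f i ∈ posi A := by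
  intro n
  induction n with
  | zero =>
    intro l f hl hm
    simpa using mem_posi_add_single hg (hl 0) (hm 0)
  | succ m ih =>
    intro l f hl hm
    rw [Fin.sum_univ_castSucc, ← add_assoc]
    exact mem_posi_add_single (ih _ _ (fun i => hl _) (fun i => hm _)) (hl _) (hm _)

lemma mem_posi_add {A : Set (W → ℝ)} {g g' : W → ℝ} (hg : g ∈ posi A) (hg' : g' ∈ posi A) :
    g + g' ∈ posi A := by
  obtain ⟨n, l, f, hl, hmem, rfl⟩ := hg'
  exact sum_mem_posi_add hg n l f hl hmem

lemma posi_mono {A B : Set (W → ℝ)} (h : A ⊆ B) : posi A ⊆ posi B := by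
  rintro g ⟨n, l, f, hl, hm, rfl⟩
  exact ⟨n, l, f, hl, fun i => h (hm i), rfl⟩

lemma CoherentSDG.sum_mem {D : Set (W → ℝ)} (hD : CoherentSDG D) :
    ∀ (n : ℕ) (l : Fin (n+1) → ℝ) (f : Fin (n+1) → W → ℝ),
      (∀ i, 0 < l i) → (∀ i, f i ∈ D) → (∑ i, l i • f i) ∈ D := by
  intro n
  induction n with
  | zero =>
    intro l f hl hm
    simpa using hD.d2 _ (hm 0) _ (hl 0)
  | succ m ih =>
    intro l f hl hm
    rw [Fin.sum_univ_castSucc]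
    exact hD.d3 _ (ih _ _ (fun i => hl _) (fun i => hm _)) _ (hD.d2 _ (hm _) _ (hl _))

lemma CoherentSDG.posi_subset {D A : Set (W → ℝ)} (hD : CoherentSDG D) (hA : A ⊆ D) :
    posi A ⊆ D := by
  rintro g ⟨n, l, f, hl, hm, rfl⟩
  exact hD.sum_mem n l f hl (fun i => hA (hm i))

lemma gpos_subset {D : Set (W → ℝ)} (hD : CoherentSDG D) : Gpos W ⊆ D :=
  fun f hf => hD.d1 f hf.1 hf.2.1 hf.2.2

lemma CoherentSDG.zero_not_mem {D : Set (W → ℝ)} (hD : CoherentSDG D) : (0 : W → ℝ) ∉ D :=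
  hD.d4 0 le_rfl

lemma CoherentSDG.not_nonpos {D : Set (W → ℝ)} (hD : CoherentSDG D) {f : W → ℝ}
    (hf : f ∈ D) (h : ∀ x, f x ≤ 0) : False :=
  hD.d4 f (by intro x; exact h x) hf

end AuxBasic


section AuxExt
variable {W : Type*}

lemma Alp_subset {C : Set ((W → ℝ) × Set W)} {lp : (W → ℝ) → Set W → EReal} {D : Set (W → ℝ)}
    (hD : CoherentSDG D) (hC : C ⊆ domC W) (hag : ∀ p ∈ C, lp p.1 p.2 = lpOf D p.1 p.2) :
    Alp C lp ⊆ D := by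
  rintro g ⟨p, hpC, m, hm, rfl⟩
  rw [hag p hpC] at hm
  obtain ⟨x, hx, hmx⟩ := lt_sSup_iff.mp hm
  obtain ⟨mu, hmu, rfl⟩ := hx
  have hmμ : m < mu := by exact_mod_cast hmx
  obtain ⟨x0, hx0⟩ := (hC hpC).2
  have key : (fun x => (p.1 x - m) * ind p.2 x)
      = (fun x => (p.1 x - mu) * ind p.2 x) + (fun x => (mu - m) * ind p.2 x) := by
    funext x; show (p.1 x - m) * ind p.2 x = (p.1 x - mu) * ind p.2 x + (mu - m) * ind p.2 x; ring
  rw [key]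
  refine hD.d3 _ hmu _ (hD.d1 _ ((isGamble_ind p.2).mulc (mu - m)) ?_ ?_)
  · intro x
    exact mul_nonneg (by linarith) (ind_nonneg _ _)
  · intro h0
    have := congrFun h0 x0
    rw [ind_of_mem hx0] at this
    simp at this
    linarith

lemma ElpSet_subset {C : Set ((W → ℝ) × Set W)} {lp : (W → ℝ) → Set W → EReal}
    {D : Set (W → ℝ)} (hD : CoherentSDG D) (hC : C ⊆ domC W)
    (hag : ∀ p ∈ C, lp p.1 p.2 = lpOf D p.1 p.2) : ElpSet C lp ⊆ D :=
  hD.posi_subset (Set.union_subset (Alp_subset hD hC hag) (gpos_subset hD))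

lemma exists_maximal_coherent {D : Set (W → ℝ)} (hD : CoherentSDG D) :
    ∃ M : Set (W → ℝ), CoherentSDG M ∧ D ⊆ M ∧
      ∀ g : W → ℝ, IsGamble g → g ≠ 0 → g ∈ M ∨ -g ∈ M := by
  classical
  set S : Set (Set (W → ℝ)) := {E | CoherentSDG E ∧ D ⊆ E} with hS
  have hchain : ∀ c ⊆ S, IsChain (· ⊆ ·) c → c.Nonempty → ∃ ub ∈ S, ∀ s ∈ c, s ⊆ ub := by
    rintro c hcS hch ⟨E0, hE0⟩
    refine ⟨⋃₀ c, ⟨?_, fun x hx => ⟨E0, hE0, (hcS hE0).2 hx⟩⟩,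
      fun s hs => Set.subset_sUnion_of_mem hs⟩
    constructor
    · rintro f ⟨E, hEc, hfE⟩; exact (hcS hEc).1.subset_gambles f hfE
    · intro f hg h0 hne; exact ⟨E0, hE0, (hcS hE0).1.d1 f hg h0 hne⟩
    · rintro f ⟨E, hEc, hfE⟩ l hl; exact ⟨E, hEc, (hcS hEc).1.d2 f hfE l hl⟩
    · rintro f ⟨E, hEc, hfE⟩ g ⟨E', hE'c, hgE'⟩
      rcases hch.total hEc hE'c with h | h
      · exact ⟨E', hE'c, (hcS hE'c).1.d3 f (h hfE) g hgE'⟩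
      · exact ⟨E, hEc, (hcS hEc).1.d3 f hfE g (h hgE')⟩
    · rintro f hf ⟨E, hEc, hfE⟩; exact (hcS hEc).1.d4 f hf hfE
  obtain ⟨M, hDM, hMmax⟩ := zorn_subset_nonempty S hchain D ⟨hD, subset_rfl⟩
  obtain ⟨hMcoh, hDMsub⟩ := hMmax.prop
  refine ⟨M, hMcoh, hDM, ?_⟩
  intro g hg hgne
  by_contra hcon
  push_neg at hcon
  obtain ⟨hg1, hg2⟩ := hcon
  have hzero_not : (0 : W → ℝ) ∉ M := hMcoh.zero_not_mem
  -- auxiliary: M ∪ {0} is closed under pointwise addition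
  have haddMM : ∀ a b : W → ℝ, (a ∈ M ∨ a = 0) → (b ∈ M ∨ b = 0) →
      ((fun x => a x + b x) ∈ M ∨ (fun x => a x + b x) = 0) := by
    rintro a b (ha | ha) (hb | hb)
    · exact Or.inl (hMcoh.d3 a ha b hb)
    · subst hb; left; simpa using ha
    · subst ha; left; simpa using hb
    · subst ha; subst hb; right; funext x; simp
  -- the enlarged set
  set M' : Set (W → ℝ) := {h | IsGamble h ∧ ∃ lam : ℝ, 0 ≤ lam ∧ ∃ mm : W → ℝ,
    (mm ∈ M ∨ mm = 0) ∧ (∀ x, lam * g x + mm x ≤ h x) ∧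
    (0 < lam ∨ mm ∈ M ∨ ((∀ x, 0 ≤ h x) ∧ h ≠ 0))} with hM'
  have hMM' : M ⊆ M' := by
    intro m hm
    exact ⟨hMcoh.subset_gambles m hm, 0, le_rfl, m, Or.inl hm,
      fun x => by simp, Or.inr (Or.inl hm)⟩
  have hgM' : g ∈ M' := ⟨hg, 1, zero_le_one, 0, Or.inr rfl, fun x => by simp,
    Or.inl one_pos⟩
  have hM'coh : CoherentSDG M' := by
    constructor
    · exact fun f hf => hf.1
    · intro f hfg hf0 hfne
      exact ⟨hfg, 0, le_rfl, 0, Or.inr rfl, fun x => by simpa using hf0 x,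
        Or.inr (Or.inr ⟨fun x => hf0 x, hfne⟩)⟩
    · rintro f ⟨hfg, lam, hlam, mm, hmm, hle, hex⟩ l hl
      refine ⟨by exact hfg.mulc l, l * lam, by positivity, fun x => l * mm x, ?_, ?_, ?_⟩
      · rcases hmm with h | h
        · exact Or.inl (hMcoh.d2 mm h l hl)
        · subst h; right; funext x; simp
      · intro x
        have := mul_le_mul_of_nonneg_left (hle x) hl.le
        show l * lam * g x + l * mm x ≤ l • f x
        simp only [smul_eq_mul]
        nlinarith
      · rcases hex with h | h | h
        · exact Or.inl (by positivity)
        · exact Or.inr (Or.inl (hMcoh.d2 mm h l hl))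
        · refine Or.inr (Or.inr ⟨fun x => ?_, fun h0 => h.2 ?_⟩)
          · have := h.1 x
            show 0 ≤ l • f x
            simp only [smul_eq_mul]; positivity
          · funext x
            have := congrFun h0 x
            simp only [Pi.smul_apply, smul_eq_mul, Pi.zero_apply] at this ⊢
            rcases mul_eq_zero.mp this with h' | h'
            · exact absurd h' (ne_of_gt hl)
            · exact h'
    · rintro f ⟨hfg, lam, hlam, mm, hmm, hle, hex⟩ f' ⟨hf'g, lam', hlam', mm', hmm', hle', hex'⟩
      refine ⟨by exact hfg.addf hf'g, lam + lam', by positivity, fun x => mm x + mm' x,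
        haddMM mm mm' hmm hmm', ?_, ?_⟩
      · intro x
        have h1 := hle x; have h2 := hle' x
        show (lam + lam') * g x + (mm x + mm' x) ≤ f x + f' x
        nlinarith
      · rcases hex with h | h | h
        · exact Or.inl (by positivity)
        · exact Or.inr (Or.inl (by
            rcases hmm' with h' | h'
            · exact hMcoh.d3 _ h _ h'
            · subst h'; simpa using h))
        · rcases hex' with h' | h' | h'
          · exact Or.inl (by positivity)
          · exact Or.inr (Or.inl (by
              rcases hmm with h'' | h''
              · exact hMcoh.d3 _ h'' _ h'
              · subst h''; simpa using h'))
          · refine Or.inr (Or.inr ⟨fun x => ?_, fun h0 => ?_⟩)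
            · have := h.1 x; have := h'.1 x
              show 0 ≤ f x + f' x
              linarith
            · apply h.2
              funext x
              have hx := congrFun h0 x
              have := h.1 x; have := h'.1 x
              simp only [Pi.add_apply, Pi.zero_apply] at hx ⊢
              linarith
    · rintro f hf0 ⟨hfg, lam, hlam, mm, hmm, hle, hex⟩
      rcases eq_or_lt_of_le hlam with heq | hpos
      · rcases hmm with hmem | h0
        · refine hMcoh.d4 mm ?_ hmem
          intro x
          have h1 := hle x; have h2 := hf0 x
          simp only [Pi.zero_apply] at h2
          have hl0 : lam = 0 := heq.symm
          rw [hl0] at h1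
          show mm x ≤ 0
          nlinarith
        · subst h0
          rcases hex with h | h | h
          · rw [← heq] at h; exact lt_irrefl 0 h
          · exact hzero_not h
          · apply h.2
            funext x
            have h1 := h.1 x; have h2 := hf0 x
            simp only [Pi.zero_apply] at h2 ⊢
            linarith
      · -- 0 < lam
        have hgle : ∀ x, lam * g x ≤ - mm x := by
          intro x
          have h1 := hle x; have h2 := hf0 x
          simp only [Pi.zero_apply] at h2
          linarith
        rcases hmm with hmem | h0
        · set r : W → ℝ := fun x => - g x - mm x / lam with hr
          have hr0 : ∀ x, 0 ≤ r x := by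
            intro x
            have := hgle x
            have hlam' : lam ≠ 0 := ne_of_gt hpos
            have h2 : mm x / lam ≤ - g x := by
              rw [div_le_iff₀ hpos]; nlinarith
            show 0 ≤ - g x - mm x / lam
            linarith
          have hmml : (fun x => (1/lam) * mm x) ∈ M := hMcoh.d2 mm hmem _ (by positivity)
          have hgrep : (fun x => - g x) = fun x => (1/lam) * mm x + r x := by
            funext x
            rw [hr]
            field_simp
            ring
          have hrg : IsGamble r := by
            have := (hg.mulc (-1)).subf ((hMcoh.subset_gambles mm hmem).mulc (1/lam))
            have he : (fun x => -1 * g x - 1 / lam * mm x) = r := by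
              funext x; rw [hr]; field_simp
            rwa [he] at this
          by_cases hrz : r = fun _ => 0
          · apply hg2
            have : -g = fun x => (1/lam) * mm x := by
              funext x
              have := congrFun hgrep x
              have h2 := congrFun hrz x
              simp only [Pi.neg_apply]
              rw [this, h2, add_zero]
            rw [this]; exact hmml
          · apply hg2
            have : -g = fun x => (1/lam) * mm x + r x := by
              funext x; exact congrFun hgrep x
            rw [this]
            exact hMcoh.d3 _ hmml _ (hMcoh.d1 r hrg (fun x => hr0 x) hrz)
        · subst h0
          apply hg2
          refine hMcoh.d1 (-g) (by
            have := hg.mulc (-1)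
            have he : (fun x => -1 * g x) = -g := by funext x; simp
            rwa [he] at this) ?_ ?_
          · intro x
            have := hgle x
            simp only [Pi.neg_apply, Pi.zero_apply] at *
            nlinarith
          · simpa using hgne
  have hM'S : M' ∈ S := ⟨hM'coh, hDMsub.trans hMM'⟩
  have : M' ⊆ M := hMmax.2 hM'S hMM'
  exact hg1 (this hgM')

end AuxExt


section AuxP
variable {Z : Type*} {M : Set (Z → ℝ)} {η : Z → ℝ}

/-- `a ∈ M ∪ {0}`. -/
def MgeZ (M : Set (Z → ℝ)) (a : Z → ℝ) : Prop := a ∈ M ∨ a = 0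

lemma MgeZ_add (hM : CoherentSDG M) {a b : Z → ℝ} (ha : MgeZ M a) (hb : MgeZ M b) :
    MgeZ M (fun z => a z + b z) := by
  rcases ha with ha | ha
  · rcases hb with hb | hb
    · exact Or.inl (hM.d3 a ha b hb)
    · subst hb; left; simpa using ha
  · subst ha
    rcases hb with hb | hb
    · left; simpa using hb
    · subst hb; right; funext z; simp

lemma MgeZ_smul (hM : CoherentSDG M) {a : Z → ℝ} (ha : MgeZ M a) {t : ℝ} (ht : 0 < t) :
    MgeZ M (fun z => t * a z) := by
  rcases ha with ha | ha
  · exact Or.inl (hM.d2 a ha t ht)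
  · subst ha; right; funext z; simp

lemma M_add_MgeZ (hM : CoherentSDG M) {a b : Z → ℝ} (ha : a ∈ M) (hb : MgeZ M b) :
    (fun z => a z + b z) ∈ M := by
  rcases hb with hb | hb
  · exact hM.d3 a ha b hb
  · subst hb; simpa using ha

lemma MgeZ_congr {a b : Z → ℝ} (ha : MgeZ M a) (e : a = b) : MgeZ M b := e ▸ ha

lemma MgeZ_nonneg (hM : CoherentSDG M) {a : Z → ℝ} (hag : IsGamble a) (ha : ∀ z, 0 ≤ a z) :
    MgeZ M a := by
  by_cases h0 : a = 0
  · exact Or.inr h0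
  · exact Or.inl (hM.d1 a hag (by intro z; simpa using ha z) h0)

/-- The scalarization of `ξ` along `η` relative to `M`. -/
noncomputable def Pfun (M : Set (Z → ℝ)) (η ξ : Z → ℝ) : ℝ :=
  sSup {μ : ℝ | (fun z => ξ z - μ * η z) ∈ M}

/-- The subspace of gambles of finite `η`-magnitude. -/
def FF (M : Set (Z → ℝ)) (η ξ : Z → ℝ) : Prop :=
  IsGamble ξ ∧ (∃ c : ℝ, 0 < c ∧ MgeZ M (fun z => c * η z - ξ z))
    ∧ (∃ c : ℝ, 0 < c ∧ MgeZ M (fun z => c * η z + ξ z))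

lemma P_congr {ξ ξ' : Z → ℝ} (e : ξ = ξ') : Pfun M η ξ = Pfun M η ξ' := by rw [e]

lemma FF_congr {ξ ξ' : Z → ℝ} (h : FF M η ξ) (e : ξ = ξ') : FF M η ξ' := e ▸ h

lemma SP_nonempty (hM : CoherentSDG M) (hη : η ∈ M) {ξ : Z → ℝ} (hξ : FF M η ξ) :
    {μ : ℝ | (fun z => ξ z - μ * η z) ∈ M}.Nonempty := by
  obtain ⟨c, hc, hmem⟩ := hξ.2.2
  refine ⟨-(c+1), ?_⟩
  show (fun z => ξ z - (-(c+1)) * η z) ∈ M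
  have e : (fun z => ξ z - (-(c+1)) * η z) = fun z => η z + (c * η z + ξ z) := by
    funext z; ring
  rw [e]
  exact M_add_MgeZ hM hη hmem

lemma SP_bddAbove (hM : CoherentSDG M) (hη : η ∈ M) {ξ : Z → ℝ} (hξ : FF M η ξ) :
    BddAbove {μ : ℝ | (fun z => ξ z - μ * η z) ∈ M} := by
  obtain ⟨c, hc, hmem⟩ := hξ.2.1
  refine ⟨c, fun μ hμ => ?_⟩
  by_contra hlt
  push_neg at hlt
  have h1 : (fun z => (c - μ) * η z) ∈ M := by
    have e : (fun z => (c - μ) * η z) = fun z => (ξ z - μ * η z) + (c * η z - ξ z) := by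
      funext z; ring
    rw [e]; exact M_add_MgeZ hM hμ hmem
  have h2 : (fun z => (μ - c) * η z) ∈ M := hM.d2 η hη (μ - c) (by linarith)
  have h3 := hM.d3 _ h1 _ h2
  apply hM.zero_not_mem
  have e2 : (fun z => (c - μ) * η z) + (fun z => (μ - c) * η z) = 0 := by
    funext z; simp only [Pi.add_apply, Pi.zero_apply]; ring
  rwa [e2] at h3

lemma P_ge_of_mem (hM : CoherentSDG M) (hη : η ∈ M) {ξ : Z → ℝ} {μ : ℝ} (hξ : FF M η ξ)
    (hμ : (fun z => ξ z - μ * η z) ∈ M) : μ ≤ Pfun M η ξ :=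
  le_csSup (SP_bddAbove hM hη hξ) hμ

lemma SP_down (hM : CoherentSDG M) (hη : η ∈ M) {ξ : Z → ℝ} {μ μ' : ℝ}
    (h : (fun z => ξ z - μ * η z) ∈ M) (hlt : μ' < μ) :
    (fun z => ξ z - μ' * η z) ∈ M := by
  have e : (fun z => ξ z - μ' * η z) = fun z => (ξ z - μ * η z) + (μ - μ') * η z := by
    funext z; ring
  rw [e]
  exact M_add_MgeZ hM h (Or.inl (hM.d2 η hη (μ - μ') (by linarith)))

lemma P_mem_of_lt (hM : CoherentSDG M) (hη : η ∈ M) {ξ : Z → ℝ} {μ : ℝ} (hξ : FF M η ξ)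
    (hlt : μ < Pfun M η ξ) : (fun z => ξ z - μ * η z) ∈ M := by
  obtain ⟨b, hb, hμb⟩ := exists_lt_of_lt_csSup (SP_nonempty hM hη hξ) hlt
  exact SP_down hM hη hb hμb

lemma P_nonneg (hM : CoherentSDG M) (hη : η ∈ M) {ξ : Z → ℝ} (hξ : FF M η ξ)
    (hmem : MgeZ M ξ) : 0 ≤ Pfun M η ξ := by
  have hstep : ∀ μ : ℝ, μ < 0 → (fun z => ξ z - μ * η z) ∈ M := by
    intro μ hμ
    have e : (fun z => ξ z - μ * η z) = fun z => (-μ) * η z + ξ z := by funext z; ring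
    rw [e]
    exact M_add_MgeZ hM (hM.d2 η hη (-μ) (by linarith)) hmem
  by_contra hneg
  push_neg at hneg
  exact absurd (P_ge_of_mem hM hη hξ (hstep (Pfun M η ξ / 2) (by linarith)))
    (by linarith)

lemma P_zero (hM : CoherentSDG M) (hη : η ∈ M) : Pfun M η (fun _ => 0) = 0 := by
  show sSup {μ : ℝ | (fun z => (0:ℝ) - μ * η z) ∈ M} = 0
  have hset : {μ : ℝ | (fun z => (0:ℝ) - μ * η z) ∈ M} = Set.Iio 0 := by
    ext μ
    simp only [Set.mem_setOf_eq, Set.mem_Iio]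
    constructor
    · intro hμ
      by_contra h
      push_neg at h
      rcases eq_or_lt_of_le h with h0 | h0
      · apply hM.zero_not_mem
        have e : (fun z => (0:ℝ) - μ * η z) = 0 := by funext z; rw [← h0]; simp
        rwa [e] at hμ
      · have h2 : (fun z => μ * η z) ∈ M := hM.d2 η hη μ h0
        have h3 := hM.d3 _ hμ _ h2
        apply hM.zero_not_mem
        have e : (fun z => (0:ℝ) - μ * η z) + (fun z => μ * η z) = 0 := by
          funext z; simp only [Pi.add_apply, Pi.zero_apply]; ring
        rwa [e] at h3
    · intro hμ
      have e : (fun z => (0:ℝ) - μ * η z) = fun z => (-μ) * η z := by funext z; ring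
      rw [e]; exact hM.d2 η hη (-μ) (by linarith)
  rw [hset, csSup_Iio]

lemma P_self (hM : CoherentSDG M) (hη : η ∈ M) : Pfun M η η = 1 := by
  show sSup {μ : ℝ | (fun z => η z - μ * η z) ∈ M} = 1
  have hset : {μ : ℝ | (fun z => η z - μ * η z) ∈ M} = Set.Iio 1 := by
    ext μ
    simp only [Set.mem_setOf_eq, Set.mem_Iio]
    constructor
    · intro hμ
      by_contra h
      push_neg at h
      rcases eq_or_lt_of_le h with h0 | h0
      · apply hM.zero_not_mem
        have e : (fun z => η z - μ * η z) = 0 := by funext z; rw [← h0]; simp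
        rwa [e] at hμ
      · have h2 : (fun z => (μ - 1) * η z) ∈ M := hM.d2 η hη (μ - 1) (by linarith)
        have h3 := hM.d3 _ hμ _ h2
        apply hM.zero_not_mem
        have e : (fun z => η z - μ * η z) + (fun z => (μ - 1) * η z) = 0 := by
          funext z; simp only [Pi.add_apply, Pi.zero_apply]; ring
        rwa [e] at h3
    · intro hμ
      have e : (fun z => η z - μ * η z) = fun z => (1 - μ) * η z := by funext z; ring
      rw [e]; exact hM.d2 η hη (1 - μ) (by linarith)
  rw [hset, csSup_Iio]

lemma FF_zero (hM : CoherentSDG M) (hη : η ∈ M) : FF M η (fun _ => 0) := by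
  refine ⟨isGamble_zero, ⟨1, one_pos, ?_⟩, ⟨1, one_pos, ?_⟩⟩ <;>
  · exact MgeZ_congr (Or.inl hη) (by funext z; ring)

lemma FF_add (hM : CoherentSDG M) {ξ ξ' : Z → ℝ} (h : FF M η ξ) (h' : FF M η ξ') :
    FF M η (fun z => ξ z + ξ' z) := by
  obtain ⟨hg, ⟨c1, hc1, h1⟩, ⟨c2, hc2, h2⟩⟩ := h
  obtain ⟨hg', ⟨c1', hc1', h1'⟩, ⟨c2', hc2', h2'⟩⟩ := h'
  refine ⟨hg.addf hg', ⟨c1 + c1', by linarith, ?_⟩, ⟨c2 + c2', by linarith, ?_⟩⟩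
  · exact MgeZ_congr (MgeZ_add hM h1 h1') (by funext z; (try simp only []); ring)
  · exact MgeZ_congr (MgeZ_add hM h2 h2') (by funext z; (try simp only []); ring)

lemma FF_neg (hM : CoherentSDG M) {ξ : Z → ℝ} (h : FF M η ξ) : FF M η (fun z => - ξ z) := by
  obtain ⟨hg, ⟨c1, hc1, h1⟩, ⟨c2, hc2, h2⟩⟩ := h
  refine ⟨?_, ⟨c2, hc2, ?_⟩, ⟨c1, hc1, ?_⟩⟩
  · have := hg.mulc (-1)
    exact (by rwa [show (fun x => -1 * ξ x) = fun z => -ξ z from funext fun z => by ring] at this)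
  · exact MgeZ_congr h2 (by funext z; (try simp only []); ring)
  · exact MgeZ_congr h1 (by funext z; (try simp only []); ring)

lemma FF_smul_pos (hM : CoherentSDG M) {ξ : Z → ℝ} (h : FF M η ξ) {a : ℝ} (ha : 0 < a) :
    FF M η (fun z => a * ξ z) := by
  obtain ⟨hg, ⟨c1, hc1, h1⟩, ⟨c2, hc2, h2⟩⟩ := h
  refine ⟨hg.mulc a, ⟨a * c1, by positivity, ?_⟩, ⟨a * c2, by positivity, ?_⟩⟩
  · exact MgeZ_congr (MgeZ_smul hM h1 ha) (by funext z; (try simp only []); ring)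
  · exact MgeZ_congr (MgeZ_smul hM h2 ha) (by funext z; (try simp only []); ring)

lemma FF_smul (hM : CoherentSDG M) (hη : η ∈ M) {ξ : Z → ℝ} (h : FF M η ξ) (a : ℝ) :
    FF M η (fun z => a * ξ z) := by
  rcases lt_trichotomy a 0 with ha | ha | ha
  · have := FF_smul_pos hM (FF_neg hM h) (show (0:ℝ) < -a by linarith)
    exact FF_congr this (by funext z; (try simp only []); ring)
  · subst ha
    exact FF_congr (FF_zero hM hη) (by funext z; (try simp only []); ring)
  · exact FF_smul_pos hM h ha

lemma FF_sub (hM : CoherentSDG M) {ξ ξ' : Z → ℝ} (h : FF M η ξ) (h' : FF M η ξ') :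
    FF M η (fun z => ξ z - ξ' z) :=
  FF_congr (FF_add hM h (FF_neg hM h')) (by funext z; (try simp only []); ring)

lemma FF_sum (hM : CoherentSDG M) (hη : η ∈ M) {ι : Type*} (c : ι → ℝ) (ζ : ι → Z → ℝ)
    (h : ∀ k, FF M η (ζ k)) (s : Finset ι) :
    FF M η (fun z => ∑ k ∈ s, c k * ζ k z) := by
  classical
  induction s using Finset.induction_on with
  | empty =>
    exact FF_congr (FF_zero hM hη) (by funext z; simp)
  | @insert a s ha ih =>
    have e : (fun z => ∑ k ∈ insert a s, c k * ζ k z)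
        = fun z => (c a * ζ a z) + ∑ k ∈ s, c k * ζ k z := by
      funext z; rw [Finset.sum_insert ha]
    rw [e]
    exact FF_add hM (FF_smul hM hη (h a) (c a)) ih

lemma P_add (hM : CoherentSDG M) (hη : η ∈ M)
    (hMtot : ∀ g : Z → ℝ, IsGamble g → g ≠ 0 → g ∈ M ∨ -g ∈ M)
    {ξ ξ' : Z → ℝ} (h : FF M η ξ) (h' : FF M η ξ') :
    Pfun M η (fun z => ξ z + ξ' z) = Pfun M η ξ + Pfun M η ξ' := by
  have hηg : IsGamble η := hM.subset_gambles η hη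
  have hFFadd : FF M η (fun z => ξ z + ξ' z) := FF_add hM h h'
  apply le_antisymm
  · by_contra hlt
    push_neg at hlt
    obtain ⟨μ, hμmem, hμgt⟩ := exists_lt_of_lt_csSup (SP_nonempty hM hη hFFadd) hlt
    set μ1 := Pfun M η ξ + (μ - (Pfun M η ξ + Pfun M η ξ')) / 2 with hμ1
    have hgt1 : Pfun M η ξ < μ1 := by rw [hμ1]; linarith
    have hgt2 : Pfun M η ξ' < μ - μ1 := by rw [hμ1]; linarith
    have hn1 : (fun z => ξ z - μ1 * η z) ∉ M := fun hmem =>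
      absurd (P_ge_of_mem hM hη h hmem) (not_le.mpr hgt1)
    have hn2 : (fun z => ξ' z - (μ - μ1) * η z) ∉ M := fun hmem =>
      absurd (P_ge_of_mem hM hη h' hmem) (not_le.mpr hgt2)
    have hA : MgeZ M (fun z => μ1 * η z - ξ z) := by
      by_cases h0 : (fun z => ξ z - μ1 * η z) = 0
      · right; funext z
        have := congrFun h0 z
        simp only [Pi.zero_apply] at this ⊢
        linarith
      · rcases hMtot _ (h.1.subf (hηg.mulc μ1)) h0 with hmem | hmem
        · exact absurd hmem hn1
        · left
          have e : -(fun z => ξ z - μ1 * η z) = fun z => μ1 * η z - ξ z := by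
            funext z; simp only [Pi.neg_apply]; ring
          rwa [e] at hmem
    have hB : MgeZ M (fun z => (μ - μ1) * η z - ξ' z) := by
      by_cases h0 : (fun z => ξ' z - (μ - μ1) * η z) = 0
      · right; funext z
        have := congrFun h0 z
        simp only [Pi.zero_apply] at this ⊢
        linarith
      · rcases hMtot _ (h'.1.subf (hηg.mulc (μ - μ1))) h0 with hmem | hmem
        · exact absurd hmem hn2
        · left
          have e : -(fun z => ξ' z - (μ - μ1) * η z) = fun z => (μ - μ1) * η z - ξ' z := by
            funext z; simp only [Pi.neg_apply]; ring
          rwa [e] at hmem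
    have hμM : (fun z => (ξ z + ξ' z) - μ * η z) ∈ M := hμmem
    have hsum : (fun z => ((ξ z + ξ' z) - μ * η z)
        + ((μ1 * η z - ξ z) + ((μ - μ1) * η z - ξ' z))) ∈ M :=
      M_add_MgeZ hM hμM (MgeZ_add hM hA hB)
    apply hM.zero_not_mem
    have e : (fun z => ((ξ z + ξ' z) - μ * η z)
        + ((μ1 * η z - ξ z) + ((μ - μ1) * η z - ξ' z))) = 0 := by
      funext z; simp only [Pi.zero_apply]; ring
    rwa [e] at hsum
  · apply le_of_forall_pos_le_add
    intro ε hε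
    have h1 : (fun z => ξ z - (Pfun M η ξ - ε/2) * η z) ∈ M :=
      P_mem_of_lt hM hη h (by linarith)
    have h2 : (fun z => ξ' z - (Pfun M η ξ' - ε/2) * η z) ∈ M :=
      P_mem_of_lt hM hη h' (by linarith)
    have h3 : (fun z => (ξ z + ξ' z)
        - ((Pfun M η ξ - ε/2) + (Pfun M η ξ' - ε/2)) * η z) ∈ M := by
      have := hM.d3 _ h1 _ h2
      have e : (fun z => ξ z - (Pfun M η ξ - ε/2) * η z)
          + (fun z => ξ' z - (Pfun M η ξ' - ε/2) * η z)
          = fun z => (ξ z + ξ' z) - ((Pfun M η ξ - ε/2) + (Pfun M η ξ' - ε/2)) * η z := by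
        funext z; simp only [Pi.add_apply]; ring
      rwa [e] at this
    have := P_ge_of_mem hM hη hFFadd h3
    linarith

lemma P_smul_pos (hM : CoherentSDG M) (hη : η ∈ M) {ξ : Z → ℝ} (h : FF M η ξ)
    {a : ℝ} (ha : 0 < a) : Pfun M η (fun z => a * ξ z) = a * Pfun M η ξ := by
  have hFFa : FF M η (fun z => a * ξ z) := FF_smul_pos hM h ha
  apply le_antisymm
  · apply csSup_le (SP_nonempty hM hη hFFa)
    intro μ hμ
    have hμ' : (fun z => ξ z - (μ/a) * η z) ∈ M := by
      have hmem : (fun z => (fun z => a * ξ z) z - μ * η z) ∈ M := hμ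
      have := hM.d2 _ hmem (1/a) (by positivity)
      have e : (1/a) • (fun z => (fun z => a * ξ z) z - μ * η z)
          = fun z => ξ z - (μ/a) * η z := by
        funext z
        simp only [Pi.smul_apply, smul_eq_mul]
        field_simp
      rwa [e] at this
    have h2 := P_ge_of_mem hM hη h hμ'
    have := (div_le_iff₀ ha).mp h2
    linarith
  · have key : Pfun M η ξ ≤ Pfun M η (fun z => a * ξ z) / a := by
      apply csSup_le (SP_nonempty hM hη h)
      intro μ hμ
      have hmem : (fun z => (fun z => a * ξ z) z - (a * μ) * η z) ∈ M := by
        have := hM.d2 _ hμ a ha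
        have e : a • (fun z => ξ z - μ * η z)
            = fun z => (fun z => a * ξ z) z - (a * μ) * η z := by
          funext z
          simp only [Pi.smul_apply, smul_eq_mul]
          ring
        rwa [e] at this
      have h2 := P_ge_of_mem hM hη hFFa hmem
      rw [le_div_iff₀ ha]
      linarith [h2]
    have := mul_le_mul_of_nonneg_left key ha.le
    rw [mul_div_cancel₀ _ (ne_of_gt ha)] at this
    linarith

lemma P_neg (hM : CoherentSDG M) (hη : η ∈ M)
    (hMtot : ∀ g : Z → ℝ, IsGamble g → g ≠ 0 → g ∈ M ∨ -g ∈ M)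
    {ξ : Z → ℝ} (h : FF M η ξ) : Pfun M η (fun z => - ξ z) = - Pfun M η ξ := by
  have h1 := P_add hM hη hMtot h (FF_neg hM h)
  have e : (fun z => ξ z + (fun z => -ξ z) z) = (fun _ : Z => (0:ℝ)) := by
    funext z; simp
  rw [P_congr e, P_zero hM hη] at h1
  linarith

lemma P_smul (hM : CoherentSDG M) (hη : η ∈ M)
    (hMtot : ∀ g : Z → ℝ, IsGamble g → g ≠ 0 → g ∈ M ∨ -g ∈ M)
    {ξ : Z → ℝ} (h : FF M η ξ) (a : ℝ) :
    Pfun M η (fun z => a * ξ z) = a * Pfun M η ξ := by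
  rcases lt_trichotomy a 0 with ha | ha | ha
  · have h2 := P_smul_pos hM hη (FF_neg hM h) (show (0:ℝ) < -a by linarith)
    have e : (fun z => (-a) * (fun z => -ξ z) z) = (fun z => a * ξ z) := by
      funext z; (try simp only []); ring
    rw [P_congr e] at h2
    rw [h2, P_neg hM hη hMtot h]
    ring
  · subst ha
    have e : (fun z => (0:ℝ) * ξ z) = (fun _ : Z => (0:ℝ)) := by funext z; ring
    rw [P_congr e, P_zero hM hη]
    ring
  · exact P_smul_pos hM hη h ha

lemma P_sum (hM : CoherentSDG M) (hη : η ∈ M)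
    (hMtot : ∀ g : Z → ℝ, IsGamble g → g ≠ 0 → g ∈ M ∨ -g ∈ M)
    {ι : Type*} (c : ι → ℝ) (ζ : ι → Z → ℝ) (h : ∀ k, FF M η (ζ k)) (s : Finset ι) :
    Pfun M η (fun z => ∑ k ∈ s, c k * ζ k z) = ∑ k ∈ s, c k * Pfun M η (ζ k) := by
  classical
  induction s using Finset.induction_on with
  | empty =>
    rw [P_congr (show (fun z => ∑ k ∈ (∅ : Finset ι), c k * ζ k z) = (fun _ : Z => (0:ℝ))
      from by funext z; simp), P_zero hM hη]
    simp
  | @insert a s ha ih =>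
    have e : (fun z => ∑ k ∈ insert a s, c k * ζ k z)
        = fun z => (fun z => c a * ζ a z) z + (fun z => ∑ k ∈ s, c k * ζ k z) z := by
      funext z; (try simp only []); rw [Finset.sum_insert ha]
    rw [P_congr e, P_add hM hη hMtot (FF_smul hM hη (h a) (c a)) (FF_sum hM hη c ζ h s),
      P_smul hM hη hMtot (h a) (c a), ih, Finset.sum_insert ha]

/-- Relative magnitude order. -/
def Below (M : Set (Z → ℝ)) (a b : Z → ℝ) : Prop :=
  ∃ c : ℝ, 0 < c ∧ MgeZ M (fun z => c * b z - a z)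

lemma Below_refl (a : Z → ℝ) : Below M a a :=
  ⟨1, one_pos, Or.inr (by funext z; simp only [Pi.zero_apply]; ring)⟩

lemma Below_trans (hM : CoherentSDG M) {a b c' : Z → ℝ}
    (h1 : Below M a b) (h2 : Below M b c') : Below M a c' := by
  obtain ⟨c1, hc1, hm1⟩ := h1
  obtain ⟨c2, hc2, hm2⟩ := h2
  refine ⟨c1 * c2, by positivity, ?_⟩
  exact MgeZ_congr (MgeZ_add hM hm1 (MgeZ_smul hM hm2 hc1)) (by funext z; (try simp only []); ring)

lemma Below_total (hM : CoherentSDG M)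
    (hMtot : ∀ g : Z → ℝ, IsGamble g → g ≠ 0 → g ∈ M ∨ -g ∈ M)
    {a b : Z → ℝ} (ha : IsGamble a) (hb : IsGamble b) :
    Below M a b ∨ Below M b a := by
  by_cases h0 : (fun z => b z - a z) = 0
  · left
    refine ⟨1, one_pos, Or.inr ?_⟩
    funext z
    have := congrFun h0 z
    simp only [Pi.zero_apply] at this ⊢
    linarith
  · rcases hMtot _ (hb.subf ha) h0 with h | h
    · left
      refine ⟨1, one_pos, Or.inl ?_⟩
      have e : (fun z => b z - a z) = fun z => 1 * b z - a z := by funext z; ring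
      rwa [e] at h
    · right
      refine ⟨1, one_pos, Or.inl ?_⟩
      have e : -(fun z => b z - a z) = fun z => 1 * a z - b z := by
        funext z; simp only [Pi.neg_apply]; ring
      rwa [e] at h

lemma exists_Below_top (hM : CoherentSDG M)
    (hMtot : ∀ g : Z → ℝ, IsGamble g → g ≠ 0 → g ∈ M ∨ -g ∈ M)
    {ι : Type*} [Fintype ι] (v : Z → ℝ) (ζ : ι → Z → ℝ)
    (hvg : IsGamble v) (hζg : ∀ k, IsGamble (ζ k)) :
    ∃ η : Z → ℝ, (η = v ∨ ∃ k, η = ζ k) ∧ Below M v η ∧ ∀ k, Below M (ζ k) η := by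
  classical
  suffices h : ∀ s : Finset ι, ∃ η : Z → ℝ, (η = v ∨ ∃ k ∈ s, η = ζ k) ∧ Below M v η ∧
      ∀ k ∈ s, Below M (ζ k) η by
    obtain ⟨η, h1, h2, h3⟩ := h Finset.univ
    refine ⟨η, ?_, h2, fun k => h3 k (Finset.mem_univ k)⟩
    rcases h1 with h1 | ⟨k, _, hk⟩
    · exact Or.inl h1
    · exact Or.inr ⟨k, hk⟩
  intro s
  induction s using Finset.induction_on with
  | empty => exact ⟨v, Or.inl rfl, Below_refl v, by simp⟩
  | @insert a s ha ih =>
    obtain ⟨η, h1, h2, h3⟩ := ih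
    have hηg : IsGamble η := by
      rcases h1 with rfl | ⟨k, _, rfl⟩
      · exact hvg
      · exact hζg k
    rcases Below_total hM hMtot (hζg a) hηg with hab | hba
    · refine ⟨η, ?_, h2, ?_⟩
      · rcases h1 with h1 | ⟨k, hk, hkk⟩
        · exact Or.inl h1
        · exact Or.inr ⟨k, Finset.mem_insert_of_mem hk, hkk⟩
      · intro k hk
        rcases Finset.mem_insert.mp hk with rfl | hk'
        · exact hab
        · exact h3 k hk'
    · refine ⟨ζ a, Or.inr ⟨a, Finset.mem_insert_self a s, rfl⟩,
        Below_trans hM h2 hba, ?_⟩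
      intro k hk
      rcases Finset.mem_insert.mp hk with rfl | hk'
      · exact Below_refl (ζ k)
      · exact Below_trans hM (h3 k hk') hba

end AuxP


section AuxML
variable {Y Z : Type*}

/-- Master Lemma: extracting a dominated positive combination on the `Y`-side from a
pointwise domination on the product. -/
lemma masterLemma {ι : Type*} [Fintype ι]
    {M : Set (Z → ℝ)} (hM : CoherentSDG M)
    (hMtot : ∀ g : Z → ℝ, IsGamble g → g ≠ 0 → g ∈ M ∨ -g ∈ M)
    (c : ι → Y → ℝ) (ζ : ι → Z → ℝ) (tag : ι → Bool)
    (hζg : ∀ k, IsGamble (ζ k))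
    (hfalse : ∀ k, tag k = false → (∀ y, 0 ≤ c k y) ∧ (∃ y, 0 < c k y) ∧ ζ k ∈ M)
    (htrue : ∀ k, tag k = true → ∀ z, 0 ≤ ζ k z)
    (hf : ∀ ν : ι → ℝ, (∀ k, 0 ≤ ν k) → (∀ k, tag k = false → ν k = 0) →
        (∀ k, ζ k = (fun _ => 0) → ν k = 0) →
        (∀ y, (∑ k, ν k * c k y) ≤ 0) → ∀ k, ν k = 0)
    (v : Z → ℝ) (hvg : IsGamble v) (hv0 : ∀ z, 0 ≤ v z) (hvne : v ≠ (fun _ => 0))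
    (g : Y → ℝ)
    (hid : ∀ y z, (∑ k, c k y * ζ k z) ≤ g y * v z) :
    ∃ ν : ι → ℝ, (∀ k, 0 ≤ ν k) ∧ (∀ k, tag k = false → ν k = 0) ∧
      ∀ y, (∑ k, ν k * c k y) ≤ g y := by
  classical
  obtain ⟨η, hηl, hBv, hBζ⟩ := exists_Below_top hM hMtot v ζ hvg hζg
  have hηg : IsGamble η := by
    rcases hηl with rfl | ⟨k, rfl⟩
    · exact hvg
    · exact hζg k
  have hvM : v ∈ M := by
    refine hM.d1 v hvg (by intro z; simpa using hv0 z) ?_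
    intro h0
    exact hvne (by funext z; exact congrFun h0 z)
  -- η is in M
  have hηM : η ∈ M := by
    have hne : η ≠ 0 := by
      intro h0
      obtain ⟨c0, hc0, hmem⟩ := hBv
      rcases hmem with h | h
      · refine hM.not_nonpos h ?_
        intro z
        have h1 := congrFun h0 z
        have h2 := hv0 z
        simp only [Pi.zero_apply] at h1
        rw [h1]
        (try simp only [])
        nlinarith
      · apply hvne
        funext z
        have h1 := congrFun h z
        have h2 := congrFun h0 z
        simp only [Pi.zero_apply] at h1 h2 ⊢
        rw [h2] at h1
        nlinarith
    rcases hηl with rfl | ⟨k, rfl⟩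
    · exact hvM
    · cases htag : tag k with
      | false => exact (hfalse k htag).2.2
      | true =>
        refine hM.d1 _ (hζg k) (by intro z; simpa using htrue k htag z) hne
  -- FF membership for v and the ζ's
  have comp3 : ∀ a : Z → ℝ, IsGamble a → (a ∈ M ∨ ∀ z, 0 ≤ a z) →
      ∃ c0 : ℝ, 0 < c0 ∧ MgeZ M (fun z => c0 * η z + a z) := by
    intro a hag haM
    refine ⟨1, one_pos, Or.inl ?_⟩
    have e : (fun z => 1 * η z + a z) = fun z => η z + a z := by funext z; ring
    rw [e]
    rcases haM with h | h
    · exact hM.d3 η hηM a h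
    · exact M_add_MgeZ hM hηM (MgeZ_nonneg hM hag h)
  have hFFζ : ∀ k, FF M η (ζ k) := by
    intro k
    refine ⟨hζg k, hBζ k, ?_⟩
    cases htag : tag k with
    | false => exact comp3 _ (hζg k) (Or.inl (hfalse k htag).2.2)
    | true => exact comp3 _ (hζg k) (Or.inr (htrue k htag))
  have hFFv : FF M η v := ⟨hvg, hBv, comp3 v hvg (Or.inr hv0)⟩
  have hPv0 : 0 ≤ Pfun M η v := P_nonneg hM hηM hFFv (Or.inl hvM)
  have hPζ0 : ∀ k, 0 ≤ Pfun M η (ζ k) := by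
    intro k
    by_cases h0 : ζ k = (fun _ => 0)
    · rw [P_congr h0, P_zero hM hηM]
    · refine P_nonneg hM hηM (hFFζ k) (Or.inl ?_)
      cases htag : tag k with
      | false => exact (hfalse k htag).2.2
      | true =>
        refine hM.d1 _ (hζg k) (by intro z; simpa using htrue k htag z) ?_
        intro hz
        exact h0 (by funext z; exact congrFun hz z)
  -- the remainder gamble and its properties
  set ω : Y → Z → ℝ := fun y z => g y * v z - ∑ k, c k y * ζ k z with hω
  have hωg : ∀ y, IsGamble (ω y) := by
    intro y
    exact (hvg.mulc (g y)).subf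
      (isGamble_sum Finset.univ (fun k z => c k y * ζ k z) (fun k _ => (hζg k).mulc (c k y)))
  have hω0 : ∀ y z, 0 ≤ ω y z := by
    intro y z
    have := hid y z
    simp only [hω]
    linarith
  have hFFω : ∀ y, FF M η (ω y) := by
    intro y
    have h1 : FF M η (fun z => g y * v z) := FF_smul hM hηM hFFv (g y)
    have h2 : FF M η (fun z => ∑ k, c k y * ζ k z) :=
      FF_sum hM hηM (fun k => c k y) ζ hFFζ Finset.univ
    exact FF_congr (FF_sub hM h1 h2) (by funext z; simp only [hω])
  have hωM : ∀ y, MgeZ M (ω y) := fun y => MgeZ_nonneg hM (hωg y) (hω0 y)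
  have hPω0 : ∀ y, 0 ≤ Pfun M η (ω y) := fun y => P_nonneg hM hηM (hFFω y) (hωM y)
  -- main identity
  have hmain : ∀ y, (∑ k, c k y * Pfun M η (ζ k)) + Pfun M η (ω y) = g y * Pfun M η v := by
    intro y
    have hPsum : Pfun M η (fun z => ∑ k, c k y * ζ k z) = ∑ k, c k y * Pfun M η (ζ k) :=
      P_sum hM hηM hMtot (fun k => c k y) ζ hFFζ Finset.univ
    have hPadd : Pfun M η (fun z => (∑ k, c k y * ζ k z) + ω y z)
        = (∑ k, c k y * Pfun M η (ζ k)) + Pfun M η (ω y) := by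
      rw [P_add hM hηM hMtot (FF_sum hM hηM (fun k => c k y) ζ hFFζ Finset.univ) (hFFω y),
        hPsum]
    have e : (fun z => (∑ k, c k y * ζ k z) + ω y z) = fun z => g y * v z := by
      funext z; simp only [hω]; ring
    rw [P_congr e] at hPadd
    rw [P_smul hM hηM hMtot hFFv (g y)] at hPadd
    linarith [hPadd]
  -- case split on the value of P v
  rcases eq_or_lt_of_le hPv0 with hPv | hPv
  · -- degenerate case: leads to a contradiction
    exfalso
    set ν : ι → ℝ := fun k => if tag k = true ∧ ζ k ≠ (fun _ => 0) then Pfun M η (ζ k) else 0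
      with hν
    have hν0 : ∀ k, 0 ≤ ν k := by
      intro k; rw [hν]; dsimp only; split_ifs with h
      · exact hPζ0 k
      · exact le_rfl
    have hνf : ∀ k, tag k = false → ν k = 0 := by
      intro k hk; rw [hν]; dsimp only; split_ifs with h
      · rw [hk] at h; simp at h
      · rfl
    have hνz : ∀ k, ζ k = (fun _ => 0) → ν k = 0 := by
      intro k hk; rw [hν]; dsimp only; split_ifs with h
      · exact absurd hk h.2
      · rfl
    have hterm : ∀ k y, ν k * c k y ≤ c k y * Pfun M η (ζ k) := by
      intro k y
      rw [hν]; dsimp only; split_ifs with h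
      · rw [mul_comm]
      · cases htag : tag k with
        | false =>
          have := (hfalse k htag).1 y
          have := hPζ0 k
          nlinarith
        | true =>
          have hz : ζ k = (fun _ => 0) := by
            by_contra hzz
            exact h ⟨htag, hzz⟩
          rw [P_congr hz, P_zero hM hηM]
          simp
    have hνsum : ∀ y, (∑ k, ν k * c k y) ≤ 0 := by
      intro y
      have h1 : (∑ k, ν k * c k y) ≤ ∑ k, c k y * Pfun M η (ζ k) :=
        Finset.sum_le_sum fun k _ => hterm k y
      have h2 := hmain y
      rw [← hPv] at h2
      have h3 := hPω0 y
      nlinarith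
    have hall := hf ν hν0 hνf hνz hνsum
    have hPtrue : ∀ k, tag k = true → Pfun M η (ζ k) = 0 := by
      intro k htag
      by_cases h0 : ζ k = (fun _ => 0)
      · rw [P_congr h0, P_zero hM hηM]
      · have := hall k
        rw [hν] at this; dsimp only at this
        rw [if_pos ⟨htag, h0⟩] at this
        exact this
    have hPall : ∀ k, Pfun M η (ζ k) = 0 := by
      intro k
      cases htag : tag k with
      | true => exact hPtrue k htag
      | false =>
        obtain ⟨y0, hy0⟩ := (hfalse k htag).2.1
        have hsum0 : (∑ j, c j y0 * Pfun M η (ζ j)) ≤ 0 := by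
          have h2 := hmain y0
          rw [← hPv] at h2
          have h3 := hPω0 y0
          nlinarith
        have htermnn : ∀ j, 0 ≤ c j y0 * Pfun M η (ζ j) := by
          intro j
          cases htj : tag j with
          | false => exact mul_nonneg ((hfalse j htj).1 y0) (hPζ0 j)
          | true => rw [hPtrue j htj]; simp
        have hzero : (∑ j, c j y0 * Pfun M η (ζ j)) = 0 :=
          le_antisymm hsum0 (Finset.sum_nonneg fun j _ => htermnn j)
        have := (Finset.sum_eq_zero_iff_of_nonneg (fun j _ => htermnn j)).mp hzero k
          (Finset.mem_univ k)
        rcases mul_eq_zero.mp this with h' | h'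
        · exact absurd h' (ne_of_gt hy0)
        · exact h'
    have hPη : Pfun M η η = 1 := P_self hM hηM
    rcases hηl with rfl | ⟨k, rfl⟩
    · rw [hPη] at hPv; norm_num at hPv
    · rw [hPall k] at hPη; norm_num at hPη
  · -- nondegenerate case
    refine ⟨fun k => if tag k = true then Pfun M η (ζ k) / Pfun M η v else 0, ?_, ?_, ?_⟩
    · intro k; dsimp only; split_ifs with h
      · exact div_nonneg (hPζ0 k) hPv.le
      · exact le_rfl
    · intro k h; dsimp only; rw [if_neg (by simp [h])]
    · intro y
      dsimp only
      have h1 := hmain y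
      have h2 := hPω0 y
      have h3 : (∑ k, (if tag k = true then Pfun M η (ζ k) / Pfun M η v else 0) * c k y)
          = (∑ k, (if tag k = true then c k y * Pfun M η (ζ k) else 0)) / Pfun M η v := by
        rw [Finset.sum_div]
        refine Finset.sum_congr rfl fun k _ => ?_
        split_ifs with h
        · rw [div_mul_eq_mul_div, mul_comm]
        · simp
      rw [h3, div_le_iff₀ hPv]
      have h4 : (∑ k, if tag k = true then c k y * Pfun M η (ζ k) else 0)
          ≤ ∑ k, c k y * Pfun M η (ζ k) := by
        refine Finset.sum_le_sum fun k _ => ?_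
        split_ifs with h
        · exact le_rfl
        · exact mul_nonneg ((hfalse k (by simpa using h)).1 y) (hPζ0 k)
      linarith

end AuxML


section AuxApp

lemma sum_mem_posiZ {W ι : Type*} [Fintype ι] {A : Set (W → ℝ)}
    (τ : ι → ℝ) (φ : ι → W → ℝ) (hτ : ∀ j, 0 ≤ τ j)
    (hφ : ∀ j, τ j ≠ 0 → φ j ∈ posi A) (s : Finset ι) :
    ((fun y => ∑ j ∈ s, τ j * φ j y) ∈ posi A) ∨ (∀ j ∈ s, τ j = 0) := by
  classical
  induction s using Finset.induction_on with
  | empty => right; intro j hj; simp at hj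
  | @insert a s ha ih =>
    by_cases h0 : τ a = 0
    · have e : (fun y => ∑ j ∈ insert a s, τ j * φ j y)
          = fun y => ∑ j ∈ s, τ j * φ j y := by
        funext y; rw [Finset.sum_insert ha, h0]; ring
      rcases ih with h | h
      · left; rw [e]; exact h
      · right; intro j hj
        rcases Finset.mem_insert.mp hj with rfl | hj'
        · exact h0
        · exact h j hj'
    · left
      have hτa : 0 < τ a := lt_of_le_of_ne (hτ a) (Ne.symm h0)
      rcases ih with h | h
      · have e : (fun y => ∑ j ∈ insert a s, τ j * φ j y)
            = τ a • φ a + fun y => ∑ j ∈ s, τ j * φ j y := by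
          funext y; simp only [Pi.add_apply, Pi.smul_apply, smul_eq_mul]
          rw [Finset.sum_insert ha]
        rw [e]
        exact mem_posi_add (mem_posi_smul (hφ a h0) hτa) h
      · have e : (fun y => ∑ j ∈ insert a s, τ j * φ j y) = τ a • φ a := by
          funext y; simp only [Pi.smul_apply, smul_eq_mul]
          rw [Finset.sum_insert ha, Finset.sum_eq_zero (fun j hj => by rw [h j hj]; ring)]
          ring
        rw [e]
        exact mem_posi_smul (hφ a h0) hτa

lemma mem_posi_sum_gpos {W ι : Type*} [Fintype ι] {A : Set (W → ℝ)}
    (hGpos : Gpos W ⊆ A)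
    (τ : ι → ℝ) (φ : ι → W → ℝ) (r : W → ℝ) (hτ : ∀ k, 0 ≤ τ k)
    (hφ : ∀ k, τ k ≠ 0 → φ k ∈ posi A) (hr : r ∈ Gpos W)
    (G : W → ℝ) (hG : ∀ y, G y = (∑ k, τ k * φ k y) + r y) : G ∈ posi A := by
  classical
  have e : G = fun y => (∑ k, τ k * φ k y) + r y := funext hG
  rcases sum_mem_posiZ τ φ hτ hφ Finset.univ with h | h
  · have e2 : G = (fun y => ∑ k, τ k * φ k y) + r := by
      rw [e]; funext y; simp
    rw [e2]
    exact mem_posi_add h (mem_posi_of_mem (hGpos hr))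
  · have e2 : G = r := by
      rw [e]; funext y
      rw [Finset.sum_eq_zero (fun j hj => by rw [h j hj]; ring)]
      ring
    rw [e2]
    exact mem_posi_of_mem (hGpos hr)

lemma sSup_sandwich {S T : Set ℝ} (h1 : T ⊆ S)
    (h2 : ∀ m ∈ S, ∀ ε : ℝ, 0 < ε → (m - ε) ∈ T) :
    sSup (Real.toEReal '' S) = sSup (Real.toEReal '' T) := by
  apply le_antisymm
  · apply sSup_le
    rintro x ⟨m, hm, rfl⟩
    have hle : ∀ ε : ℝ, 0 < ε → ((m - ε : ℝ) : EReal) ≤ sSup (Real.toEReal '' T) :=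
      fun ε hε => le_sSup ⟨m - ε, h2 m hm ε hε, rfl⟩
    by_contra hcon
    push_neg at hcon
    have hbot : sSup (Real.toEReal '' T) ≠ ⊥ := by
      intro h
      have := hle 1 one_pos
      rw [h, le_bot_iff] at this
      exact EReal.coe_ne_bot _ this
    have htop : sSup (Real.toEReal '' T) ≠ ⊤ := ne_top_of_lt hcon
    lift sSup (Real.toEReal '' T) to ℝ using ⟨htop, hbot⟩ with a ha
    have hma : a < m := by exact_mod_cast hcon
    have h3 : ∀ ε : ℝ, 0 < ε → m - ε ≤ a := by
      intro ε hε
      have := hle ε hε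
      exact_mod_cast this
    have := h3 ((m - a)/2) (by linarith)
    linarith
  · exact sSup_le_sSup (Set.image_mono h1)

end AuxApp

section KeySide
variable {X1 X2 : Type*} [Nonempty X1] [Nonempty X2]

lemma key_side1
    (C1 : Set ((X1 → ℝ) × Set X1)) (hC1 : C1 ⊆ domC X1)
    (lp1 : (X1 → ℝ) → Set X1 → EReal) (hlp1 : Coherent C1 lp1)
    (C2 : Set ((X2 → ℝ) × Set X2)) (hC2 : C2 ⊆ domC X2)
    (lp2 : (X2 → ℝ) → Set X2 → EReal) (hlp2 : Coherent C2 lp2)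
    (F1 : Set (Set X1)) (F2 : Set (Set X2))
    (hF1 : ∀ A ∈ F1, A.Nonempty) (hF2 : ∀ A ∈ F2, A.Nonempty)
    (f1 : X1 → ℝ) (hf1 : IsGamble f1) (B1 : Set X1) (hB1 : B1.Nonempty)
    (B2 : Set X2) (hB2mem : B2 ∈ F2 ∪ {Set.univ}) :
    lpProd C1 lp1 C2 lp2 F1 F2 (fun p => f1 p.1) (B1 ×ˢ B2) = natExtLP C1 lp1 f1 B1 := by
  classical
  obtain ⟨D1w, hD1w, hag1⟩ := hlp1
  obtain ⟨D2w, hD2w, hag2⟩ := hlp2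
  have hE1sub : ElpSet C1 lp1 ⊆ D1w := ElpSet_subset hD1w hC1 hag1
  have hE2sub : ElpSet C2 lp2 ⊆ D2w := ElpSet_subset hD2w hC2 hag2
  obtain ⟨M2, hM2, hD2M, hM2tot⟩ := exists_maximal_coherent hD2w
  have hB2ne : B2.Nonempty := by
    rcases hB2mem with h | h
    · exact hF2 B2 h
    · rw [Set.mem_singleton_iff] at h
      subst h
      exact Set.univ_nonempty
  show sSup (Real.toEReal ''
      {m : ℝ | (fun p : X1 × X2 => (f1 p.1 - m) * ind (B1 ×ˢ B2) p) ∈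
        indNatExt (ElpSet C1 lp1) (ElpSet C2 lp2) F1 F2})
    = sSup (Real.toEReal '' {m : ℝ | (fun x => (f1 x - m) * ind B1 x) ∈ ElpSet C1 lp1})
  apply sSup_sandwich
  · -- T ⊆ S
    intro m hm
    have hA21 : (fun p : X1 × X2 => (fun x => (f1 x - m) * ind B1 x) p.1 * ind B2 p.2)
        ∈ A21 (ElpSet C1 lp1) F2 := ⟨_, hm, B2, hB2mem, rfl⟩
    have e : (fun p : X1 × X2 => (f1 p.1 - m) * ind (B1 ×ˢ B2) p)
        = fun p : X1 × X2 => (fun x => (f1 x - m) * ind B1 x) p.1 * ind B2 p.2 := by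
      funext p; rw [ind_prod]; (try simp only []); ring
    show _ ∈ indNatExt (ElpSet C1 lp1) (ElpSet C2 lp2) F1 F2
    rw [e]
    exact mem_posi_of_mem (Or.inl (Or.inr hA21))
  · -- the ε-direction
    intro m hm ε hε
    obtain ⟨n, l, h, hl, hmem, heq⟩ := hm
    -- classify each term
    have hdata : ∀ k : Fin (n+1), ∃ (cc : X1 → ℝ) (ζ : X2 → ℝ) (t : Bool) (φ : X1 → ℝ),
        IsGamble ζ ∧ IsGamble cc ∧
        (∀ y z, cc y * ζ z ≤ l k * h k (y, z)) ∧
        (t = false → (∀ y, 0 ≤ cc y) ∧ (∃ y, 0 < cc y) ∧ ζ ∈ M2) ∧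
        (t = true → (∀ z, 0 ≤ ζ z)) ∧
        (t = true → ((cc = fun _ => 0) ∧ ζ = (fun _ => 0)) ∨
          (φ ∈ ElpSet C1 lp1 ∧ cc = (fun y => l k * φ y) ∧ ζ ≠ (fun _ => 0))) := by
      intro k
      rcases hmem k with (h12 | h21) | hpos
      · obtain ⟨f2, hf2, B1', hB1', hrep⟩ := h12
        refine ⟨fun y => l k * ind B1' y, f2, false, 0,
          hD2w.subset_gambles f2 (hE2sub hf2), (isGamble_ind B1').mulc (l k), ?_, ?_, ?_, ?_⟩
        · intro y z
          rw [hrep]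
          exact le_of_eq (by ring)
        · intro _
          refine ⟨fun y => mul_nonneg (hl k).le (ind_nonneg _ _), ?_, hD2M (hE2sub hf2)⟩
          have hB1'ne : B1'.Nonempty := by
            rcases hB1' with h' | h'
            · exact hF1 B1' h'
            · rw [Set.mem_singleton_iff] at h'; subst h'; exact Set.univ_nonempty
          obtain ⟨y0, hy0⟩ := hB1'ne
          refine ⟨y0, ?_⟩
          show 0 < l k * ind B1' y0
          rw [ind_of_mem hy0]
          simpa using hl k
        · intro h'; simp at h'
        · intro h'; simp at h'
      · obtain ⟨φ, hφ, B2', hB2', hrep⟩ := h21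
        have hB2'ne : B2'.Nonempty := by
          rcases hB2' with h' | h'
          · exact hF2 B2' h'
          · rw [Set.mem_singleton_iff] at h'; subst h'; exact Set.univ_nonempty
        obtain ⟨z0, hz0⟩ := hB2'ne
        refine ⟨fun y => l k * φ y, ind B2', true, φ, isGamble_ind B2',
          (hD1w.subset_gambles φ (hE1sub hφ)).mulc (l k), ?_, by simp, fun _ z => ind_nonneg _ _,
          fun _ => Or.inr ⟨hφ, rfl, ?_⟩⟩
        · intro y z
          rw [hrep]
          exact le_of_eq (by ring)
        · intro h0
          have := congrFun h0 z0
          rw [ind_of_mem hz0] at this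
          norm_num at this
      · refine ⟨fun _ => 0, fun _ => 0, true, 0, isGamble_zero, isGamble_zero, ?_,
          by simp, fun _ z => le_rfl, fun _ => Or.inl ⟨rfl, rfl⟩⟩
        intro y z
        have h0 : (0:ℝ) ≤ h k (y, z) := hpos.2.1 (y, z)
        show (0:ℝ) * 0 ≤ l k * h k (y, z)
        rw [zero_mul]
        exact mul_nonneg (hl k).le h0
    choose cc ζ tg φ hζg hccg hineq hfal htru hφd using hdata
    -- the identification of the sum
    have hsum : ∀ y z, (∑ k, l k * h k (y, z)) = (f1 y - m) * ind (B1 ×ˢ B2) (y, z) := by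
      intro y z
      have h1 := congrFun heq (y, z)
      simp only [Finset.sum_apply, Pi.smul_apply, smul_eq_mul] at h1
      exact h1.symm
    have hid : ∀ (y : X1) (z : X2),
        (∑ k, cc k y * ζ k z) ≤ (fun y => (f1 y - m) * ind B1 y) y * ind B2 z := by
      intro y z
      calc (∑ k, cc k y * ζ k z) ≤ ∑ k, l k * h k (y, z) :=
            Finset.sum_le_sum fun k _ => hineq k y z
        _ = (f1 y - m) * ind (B1 ×ˢ B2) (y, z) := hsum y z
        _ = (fun y => (f1 y - m) * ind B1 y) y * ind B2 z := by
            rw [ind_prod]; (try simp only []); ring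
    -- the hf condition
    have hfcond : ∀ ν : Fin (n+1) → ℝ, (∀ k, 0 ≤ ν k) → (∀ k, tg k = false → ν k = 0) →
        (∀ k, ζ k = (fun _ => 0) → ν k = 0) →
        (∀ y, (∑ k, ν k * cc k y) ≤ 0) → ∀ k, ν k = 0 := by
      intro ν hν0 hνf hνz hνsum k
      by_contra hk0
      have hνreal : ∀ j, ν j ≠ 0 →
          φ j ∈ ElpSet C1 lp1 ∧ cc j = (fun y => l j * φ j y) := by
        intro j hj
        have htj : tg j = true := by
          cases h' : tg j
          · exact absurd (hνf j h') hj
          · rfl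
        rcases hφd j htj with ⟨_, hz⟩ | ⟨h1', h2', _⟩
        · exact absurd (hνz j hz) hj
        · exact ⟨h1', h2'⟩
      set τ : Fin (n+1) → ℝ := fun j => ν j * l j with hτdef
      have hτ0 : ∀ j, 0 ≤ τ j := fun j => mul_nonneg (hν0 j) (hl j).le
      have hτne : ∀ j, τ j ≠ 0 → ν j ≠ 0 := by
        intro j hj h0
        exact hj (by rw [hτdef]; (try simp only []); rw [h0]; ring)
      have he : (fun y => ∑ j, ν j * cc j y) = fun y => ∑ j, τ j * φ j y := by
        funext y
        refine Finset.sum_congr rfl fun j _ => ?_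
        by_cases hj : ν j = 0
        · rw [hj, hτdef]; (try simp only []); rw [hj]; ring
        · obtain ⟨_, h2'⟩ := hνreal j hj
          rw [h2', hτdef]; (try simp only []); ring
      have hτk : τ k ≠ 0 := by
        rw [hτdef]; (try simp only [])
        exact mul_ne_zero hk0 (ne_of_gt (hl k))
      rcases sum_mem_posiZ τ φ hτ0 (fun j hj => (hνreal j (hτne j hj)).1) Finset.univ with
        hmem' | hzero
      · have hmemD : (fun y => ∑ j, ν j * cc j y) ∈ D1w := by
          rw [he]; exact hE1sub hmem'
        exact hD1w.not_nonpos hmemD hνsum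
      · exact hτk (hzero k (Finset.mem_univ k))
    obtain ⟨ν, hν0, hνf, hbound⟩ := masterLemma hM2 hM2tot cc ζ tg hζg hfal htru hfcond
      (ind B2) (isGamble_ind B2) (ind_nonneg B2)
      (by
        obtain ⟨z0, hz0⟩ := hB2ne
        intro h0
        have := congrFun h0 z0
        rw [ind_of_mem hz0] at this
        norm_num at this)
      (fun y => (f1 y - m) * ind B1 y) hid
    -- assemble the membership of (f1 - (m-ε)) * ind B1 into E1
    show (fun x => (f1 x - (m - ε)) * ind B1 x) ∈ ElpSet C1 lp1
    set τ : Fin (n+1) → ℝ := fun j => if ζ j = (fun _ => 0) then 0 else ν j * l j with hτdef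
    have hτ0 : ∀ j, 0 ≤ τ j := by
      intro j
      rw [hτdef]; dsimp only; split_ifs with h'
      · exact le_rfl
      · exact mul_nonneg (hν0 j) (hl j).le
    have hφmem : ∀ j, τ j ≠ 0 → φ j ∈ posi (Alp C1 lp1 ∪ Gpos X1) := by
      intro j hj
      rw [hτdef] at hj; dsimp only at hj
      split_ifs at hj with h'
      · exact absurd rfl hj
      · have hνj : ν j ≠ 0 := fun h0 => hj (by rw [h0]; ring)
        have htj : tg j = true := by
          cases h'' : tg j
          · exact absurd (hνf j h'') hνj
          · rfl
        rcases hφd j htj with ⟨_, hz⟩ | ⟨h1', _, _⟩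
        · exact absurd hz h'
        · exact h1'
    have he : ∀ y, (∑ j, ν j * cc j y) = ∑ j, τ j * φ j y := by
      intro y
      refine Finset.sum_congr rfl fun j _ => ?_
      rw [hτdef]; dsimp only
      split_ifs with h'
      · -- ζ j = 0; then cc j = 0 or contradiction
        rw [zero_mul]
        by_cases hνj : ν j = 0
        · rw [hνj]; ring
        · have htj : tg j = true := by
            cases h'' : tg j
            · exact absurd (hνf j h'') hνj
            · rfl
          rcases hφd j htj with ⟨hc0, _⟩ | ⟨_, _, hzne⟩
          · rw [hc0]; ring
          · exact absurd h' hzne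
      · by_cases hνj : ν j = 0
        · rw [hνj]; ring
        · have htj : tg j = true := by
            cases h'' : tg j
            · exact absurd (hνf j h'') hνj
            · rfl
          rcases hφd j htj with ⟨_, hz⟩ | ⟨_, h2', _⟩
          · exact absurd hz h'
          · rw [h2']; ring
    set r : X1 → ℝ := fun y => (f1 y - (m - ε)) * ind B1 y - ∑ j, τ j * φ j y with hrdef
    have hr0 : ∀ y, 0 ≤ r y := by
      intro y
      have h1 := hbound y
      rw [he y] at h1
      rw [hrdef]; dsimp only
      have h2 : (f1 y - (m - ε)) * ind B1 y = (f1 y - m) * ind B1 y + ε * ind B1 y := by ring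
      have h3 : 0 ≤ ε * ind B1 y := mul_nonneg hε.le (ind_nonneg _ _)
      linarith
    have hrne : r ≠ 0 := by
      intro h0
      obtain ⟨y0, hy0⟩ := hB1
      have h1 := congrFun h0 y0
      have h2 := hbound y0
      rw [he y0] at h2
      rw [hrdef] at h1
      simp only [Pi.zero_apply] at h1
      rw [ind_of_mem hy0] at h1 h2
      simp only [mul_one] at h1 h2
      nlinarith
    have hrg : IsGamble r := by
      have hG : IsGamble (fun y => (f1 y - (m - ε)) * ind B1 y) :=
        (hf1.subf (isGamble_const (m - ε))).mulf (isGamble_ind B1)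
      have hS : IsGamble (fun y => ∑ j, τ j * φ j y) := by
        refine isGamble_sum Finset.univ (fun j y => τ j * φ j y) fun j _ => ?_
        by_cases hj : τ j = 0
        · have e : (fun y => τ j * φ j y) = fun _ => (0:ℝ) := by
            funext y; rw [hj]; ring
          rw [e]; exact isGamble_zero
        · exact (hD1w.subset_gambles _ (hE1sub (hφmem j hj))).mulc (τ j)
      exact hG.subf hS
    refine mem_posi_sum_gpos Set.subset_union_right τ φ r hτ0 hφmem
      ⟨hrg, by intro y; simpa using hr0 y, hrne⟩ _ ?_
    intro y
    rw [hrdef]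
    ring


lemma key_side2
    (C1 : Set ((X1 → ℝ) × Set X1)) (hC1 : C1 ⊆ domC X1)
    (lp1 : (X1 → ℝ) → Set X1 → EReal) (hlp1 : Coherent C1 lp1)
    (C2 : Set ((X2 → ℝ) × Set X2)) (hC2 : C2 ⊆ domC X2)
    (lp2 : (X2 → ℝ) → Set X2 → EReal) (hlp2 : Coherent C2 lp2)
    (F1 : Set (Set X1)) (F2 : Set (Set X2))
    (hF1 : ∀ A ∈ F1, A.Nonempty) (hF2 : ∀ A ∈ F2, A.Nonempty)
    (f2 : X2 → ℝ) (hf2 : IsGamble f2) (B2 : Set X2) (hB2 : B2.Nonempty)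
    (B1 : Set X1) (hB1mem : B1 ∈ F1 ∪ {Set.univ}) :
    lpProd C1 lp1 C2 lp2 F1 F2 (fun p => f2 p.2) (B1 ×ˢ B2) = natExtLP C2 lp2 f2 B2 := by
  classical
  obtain ⟨D1w, hD1w, hag1⟩ := hlp1
  obtain ⟨D2w, hD2w, hag2⟩ := hlp2
  have hE1sub : ElpSet C1 lp1 ⊆ D1w := ElpSet_subset hD1w hC1 hag1
  have hE2sub : ElpSet C2 lp2 ⊆ D2w := ElpSet_subset hD2w hC2 hag2
  obtain ⟨M1, hM1, hD1M, hM1tot⟩ := exists_maximal_coherent hD1w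
  have hB1ne : B1.Nonempty := by
    rcases hB1mem with h | h
    · exact hF1 B1 h
    · rw [Set.mem_singleton_iff] at h
      subst h
      exact Set.univ_nonempty
  show sSup (Real.toEReal ''
      {m : ℝ | (fun p : X1 × X2 => (f2 p.2 - m) * ind (B1 ×ˢ B2) p) ∈
        indNatExt (ElpSet C1 lp1) (ElpSet C2 lp2) F1 F2})
    = sSup (Real.toEReal '' {m : ℝ | (fun x => (f2 x - m) * ind B2 x) ∈ ElpSet C2 lp2})
  apply sSup_sandwich
  · -- T ⊆ S
    intro m hm
    have hA12 : (fun p : X1 × X2 => (fun x => (f2 x - m) * ind B2 x) p.2 * ind B1 p.1)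
        ∈ A12 (ElpSet C2 lp2) F1 := ⟨_, hm, B1, hB1mem, rfl⟩
    have e : (fun p : X1 × X2 => (f2 p.2 - m) * ind (B1 ×ˢ B2) p)
        = fun p : X1 × X2 => (fun x => (f2 x - m) * ind B2 x) p.2 * ind B1 p.1 := by
      funext p; rw [ind_prod]; (try simp only []); ring
    show _ ∈ indNatExt (ElpSet C1 lp1) (ElpSet C2 lp2) F1 F2
    rw [e]
    exact mem_posi_of_mem (Or.inl (Or.inl hA12))
  · -- the ε-direction
    intro m hm ε hε
    obtain ⟨n, l, h, hl, hmem, heq⟩ := hm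
    have hdata : ∀ k : Fin (n+1), ∃ (cc : X2 → ℝ) (ζ : X1 → ℝ) (t : Bool) (φ : X2 → ℝ),
        IsGamble ζ ∧ IsGamble cc ∧
        (∀ y z, cc y * ζ z ≤ l k * h k (z, y)) ∧
        (t = false → (∀ y, 0 ≤ cc y) ∧ (∃ y, 0 < cc y) ∧ ζ ∈ M1) ∧
        (t = true → (∀ z, 0 ≤ ζ z)) ∧
        (t = true → ((cc = fun _ => 0) ∧ ζ = (fun _ => 0)) ∨
          (φ ∈ ElpSet C2 lp2 ∧ cc = (fun y => l k * φ y) ∧ ζ ≠ (fun _ => 0))) := by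
      intro k
      rcases hmem k with (h12 | h21) | hpos
      · -- A12 term: tag true here
        obtain ⟨φ, hφ, B1', hB1', hrep⟩ := h12
        have hB1'ne : B1'.Nonempty := by
          rcases hB1' with h' | h'
          · exact hF1 B1' h'
          · rw [Set.mem_singleton_iff] at h'; subst h'; exact Set.univ_nonempty
        obtain ⟨z0, hz0⟩ := hB1'ne
        refine ⟨fun y => l k * φ y, ind B1', true, φ, isGamble_ind B1',
          (hD2w.subset_gambles φ (hE2sub hφ)).mulc (l k), ?_, by simp, fun _ z => ind_nonneg _ _,
          fun _ => Or.inr ⟨hφ, rfl, ?_⟩⟩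
        · intro y z
          rw [hrep]
          exact le_of_eq (by ring)
        · intro h0
          have := congrFun h0 z0
          rw [ind_of_mem hz0] at this
          norm_num at this
      · -- A21 term: tag false here
        obtain ⟨f1', hf1', B2', hB2', hrep⟩ := h21
        refine ⟨fun y => l k * ind B2' y, f1', false, 0,
          hD1w.subset_gambles f1' (hE1sub hf1'), (isGamble_ind B2').mulc (l k), ?_, ?_, ?_, ?_⟩
        · intro y z
          rw [hrep]
          exact le_of_eq (by ring)
        · intro _
          refine ⟨fun y => mul_nonneg (hl k).le (ind_nonneg _ _), ?_, hD1M (hE1sub hf1')⟩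
          have hB2'ne : B2'.Nonempty := by
            rcases hB2' with h' | h'
            · exact hF2 B2' h'
            · rw [Set.mem_singleton_iff] at h'; subst h'; exact Set.univ_nonempty
          obtain ⟨y0, hy0⟩ := hB2'ne
          refine ⟨y0, ?_⟩
          show 0 < l k * ind B2' y0
          rw [ind_of_mem hy0]
          simpa using hl k
        · intro h'; simp at h'
        · intro h'; simp at h'
      · refine ⟨fun _ => 0, fun _ => 0, true, 0, isGamble_zero, isGamble_zero, ?_,
          by simp, fun _ z => le_rfl, fun _ => Or.inl ⟨rfl, rfl⟩⟩
        intro y z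
        have h0 : (0:ℝ) ≤ h k (z, y) := hpos.2.1 (z, y)
        show (0:ℝ) * 0 ≤ l k * h k (z, y)
        rw [zero_mul]
        exact mul_nonneg (hl k).le h0
    choose cc ζ tg φ hζg hccg hineq hfal htru hφd using hdata
    have hsum : ∀ (y : X2) (z : X1),
        (∑ k, l k * h k (z, y)) = (f2 y - m) * ind (B1 ×ˢ B2) (z, y) := by
      intro y z
      have h1 := congrFun heq (z, y)
      simp only [Finset.sum_apply, Pi.smul_apply, smul_eq_mul] at h1
      exact h1.symm
    have hid : ∀ (y : X2) (z : X1),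
        (∑ k, cc k y * ζ k z) ≤ (fun y => (f2 y - m) * ind B2 y) y * ind B1 z := by
      intro y z
      calc (∑ k, cc k y * ζ k z) ≤ ∑ k, l k * h k (z, y) :=
            Finset.sum_le_sum fun k _ => hineq k y z
        _ = (f2 y - m) * ind (B1 ×ˢ B2) (z, y) := hsum y z
        _ = (fun y => (f2 y - m) * ind B2 y) y * ind B1 z := by
            rw [ind_prod]; (try simp only []); ring
    have hfcond : ∀ ν : Fin (n+1) → ℝ, (∀ k, 0 ≤ ν k) → (∀ k, tg k = false → ν k = 0) →
        (∀ k, ζ k = (fun _ => 0) → ν k = 0) →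
        (∀ y, (∑ k, ν k * cc k y) ≤ 0) → ∀ k, ν k = 0 := by
      intro ν hν0 hνf hνz hνsum k
      by_contra hk0
      have hνreal : ∀ j, ν j ≠ 0 →
          φ j ∈ ElpSet C2 lp2 ∧ cc j = (fun y => l j * φ j y) := by
        intro j hj
        have htj : tg j = true := by
          cases h' : tg j
          · exact absurd (hνf j h') hj
          · rfl
        rcases hφd j htj with ⟨_, hz⟩ | ⟨h1', h2', _⟩
        · exact absurd (hνz j hz) hj
        · exact ⟨h1', h2'⟩
      set τ : Fin (n+1) → ℝ := fun j => ν j * l j with hτdef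
      have hτ0 : ∀ j, 0 ≤ τ j := fun j => mul_nonneg (hν0 j) (hl j).le
      have hτne : ∀ j, τ j ≠ 0 → ν j ≠ 0 := by
        intro j hj h0
        exact hj (by rw [hτdef]; (try simp only []); rw [h0]; ring)
      have he : (fun y => ∑ j, ν j * cc j y) = fun y => ∑ j, τ j * φ j y := by
        funext y
        refine Finset.sum_congr rfl fun j _ => ?_
        by_cases hj : ν j = 0
        · rw [hj, hτdef]; (try simp only []); rw [hj]; ring
        · obtain ⟨_, h2'⟩ := hνreal j hj
          rw [h2', hτdef]; (try simp only []); ring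
      have hτk : τ k ≠ 0 := by
        rw [hτdef]; (try simp only [])
        exact mul_ne_zero hk0 (ne_of_gt (hl k))
      rcases sum_mem_posiZ τ φ hτ0 (fun j hj => (hνreal j (hτne j hj)).1) Finset.univ with
        hmem' | hzero
      · have hmemD : (fun y => ∑ j, ν j * cc j y) ∈ D2w := by
          rw [he]; exact hE2sub hmem'
        exact hD2w.not_nonpos hmemD hνsum
      · exact hτk (hzero k (Finset.mem_univ k))
    obtain ⟨ν, hν0, hνf, hbound⟩ := masterLemma hM1 hM1tot cc ζ tg hζg hfal htru hfcond
      (ind B1) (isGamble_ind B1) (ind_nonneg B1)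
      (by
        obtain ⟨z0, hz0⟩ := hB1ne
        intro h0
        have := congrFun h0 z0
        rw [ind_of_mem hz0] at this
        norm_num at this)
      (fun y => (f2 y - m) * ind B2 y) hid
    show (fun x => (f2 x - (m - ε)) * ind B2 x) ∈ ElpSet C2 lp2
    set τ : Fin (n+1) → ℝ := fun j => if ζ j = (fun _ => 0) then 0 else ν j * l j with hτdef
    have hτ0 : ∀ j, 0 ≤ τ j := by
      intro j
      rw [hτdef]; dsimp only; split_ifs with h'
      · exact le_rfl
      · exact mul_nonneg (hν0 j) (hl j).le
    have hφmem : ∀ j, τ j ≠ 0 → φ j ∈ posi (Alp C2 lp2 ∪ Gpos X2) := by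
      intro j hj
      rw [hτdef] at hj; dsimp only at hj
      split_ifs at hj with h'
      · exact absurd rfl hj
      · have hνj : ν j ≠ 0 := fun h0 => hj (by rw [h0]; ring)
        have htj : tg j = true := by
          cases h'' : tg j
          · exact absurd (hνf j h'') hνj
          · rfl
        rcases hφd j htj with ⟨_, hz⟩ | ⟨h1', _, _⟩
        · exact absurd hz h'
        · exact h1'
    have he : ∀ y, (∑ j, ν j * cc j y) = ∑ j, τ j * φ j y := by
      intro y
      refine Finset.sum_congr rfl fun j _ => ?_
      rw [hτdef]; dsimp only
      split_ifs with h'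
      · rw [zero_mul]
        by_cases hνj : ν j = 0
        · rw [hνj]; ring
        · have htj : tg j = true := by
            cases h'' : tg j
            · exact absurd (hνf j h'') hνj
            · rfl
          rcases hφd j htj with ⟨hc0, _⟩ | ⟨_, _, hzne⟩
          · rw [hc0]; ring
          · exact absurd h' hzne
      · by_cases hνj : ν j = 0
        · rw [hνj]; ring
        · have htj : tg j = true := by
            cases h'' : tg j
            · exact absurd (hνf j h'') hνj
            · rfl
          rcases hφd j htj with ⟨_, hz⟩ | ⟨_, h2', _⟩
          · exact absurd hz h'
          · rw [h2']; ring
    set r : X2 → ℝ := fun y => (f2 y - (m - ε)) * ind B2 y - ∑ j, τ j * φ j y with hrdef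
    have hr0 : ∀ y, 0 ≤ r y := by
      intro y
      have h1 := hbound y
      rw [he y] at h1
      rw [hrdef]; dsimp only
      have h2 : (f2 y - (m - ε)) * ind B2 y = (f2 y - m) * ind B2 y + ε * ind B2 y := by ring
      have h3 : 0 ≤ ε * ind B2 y := mul_nonneg hε.le (ind_nonneg _ _)
      linarith
    have hrne : r ≠ 0 := by
      intro h0
      obtain ⟨y0, hy0⟩ := hB2
      have h1 := congrFun h0 y0
      have h2 := hbound y0
      rw [he y0] at h2
      rw [hrdef] at h1
      simp only [Pi.zero_apply] at h1
      rw [ind_of_mem hy0] at h1 h2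
      simp only [mul_one] at h1 h2
      nlinarith
    have hrg : IsGamble r := by
      have hG : IsGamble (fun y => (f2 y - (m - ε)) * ind B2 y) :=
        (hf2.subf (isGamble_const (m - ε))).mulf (isGamble_ind B2)
      have hS : IsGamble (fun y => ∑ j, τ j * φ j y) := by
        refine isGamble_sum Finset.univ (fun j y => τ j * φ j y) fun j _ => ?_
        by_cases hj : τ j = 0
        · have e : (fun y => τ j * φ j y) = fun _ => (0:ℝ) := by
            funext y; rw [hj]; ring
          rw [e]; exact isGamble_zero
        · exact (hD2w.subset_gambles _ (hE2sub (hφmem j hj))).mulc (τ j)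
      exact hG.subf hS
    refine mem_posi_sum_gpos Set.subset_union_right τ φ r hτ0 hφmem
      ⟨hrg, by intro y; simpa using hr0 y, hrne⟩ _ ?_
    intro y
    rw [hrdef]
    ring

end KeySide


/-- Proposition 12: local values of the independent natural extension
of two coherent conditional lower previsions. -/
theorem stmt11 {X1 X2 : Type*} [Nonempty X1] [Nonempty X2]
    (C1 : Set ((X1 → ℝ) × Set X1)) (hC1 : C1 ⊆ domC X1)
    (lp1 : (X1 → ℝ) → Set X1 → EReal) (hlp1 : Coherent C1 lp1)
    (C2 : Set ((X2 → ℝ) × Set X2)) (hC2 : C2 ⊆ domC X2)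
    (lp2 : (X2 → ℝ) → Set X2 → EReal) (hlp2 : Coherent C2 lp2)
    (F1 : Set (Set X1)) (F2 : Set (Set X2))
    (hF1 : ∀ A ∈ F1, A.Nonempty) (hF2 : ∀ A ∈ F2, A.Nonempty) :
    (∀ (f1 : X1 → ℝ) (B1 : Set X1), IsGamble f1 → B1.Nonempty → ∀ B2 ∈ F2,
      lpProd C1 lp1 C2 lp2 F1 F2 (fun p => f1 p.1) (B1 ×ˢ B2) =
        lpProd C1 lp1 C2 lp2 F1 F2 (fun p => f1 p.1) (B1 ×ˢ (Set.univ : Set X2)) ∧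
      lpProd C1 lp1 C2 lp2 F1 F2 (fun p => f1 p.1) (B1 ×ˢ (Set.univ : Set X2)) =
        natExtLP C1 lp1 f1 B1) ∧
    (∀ (f2 : X2 → ℝ) (B2 : Set X2), IsGamble f2 → B2.Nonempty → ∀ B1 ∈ F1,
      lpProd C1 lp1 C2 lp2 F1 F2 (fun p => f2 p.2) (B1 ×ˢ B2) =
        lpProd C1 lp1 C2 lp2 F1 F2 (fun p => f2 p.2) ((Set.univ : Set X1) ×ˢ B2) ∧
      lpProd C1 lp1 C2 lp2 F1 F2 (fun p => f2 p.2) ((Set.univ : Set X1) ×ˢ B2) =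
        natExtLP C2 lp2 f2 B2) := by
  constructor
  · intro f1 B1 hf1 hB1 B2 hB2
    have h1 := key_side1 C1 hC1 lp1 hlp1 C2 hC2 lp2 hlp2 F1 F2 hF1 hF2 f1 hf1 B1 hB1 B2
      (Set.mem_union_left _ hB2)
    have h2 := key_side1 C1 hC1 lp1 hlp1 C2 hC2 lp2 hlp2 F1 F2 hF1 hF2 f1 hf1 B1 hB1 Set.univ
      (Set.mem_union_right _ (Set.mem_singleton _))
    exact ⟨h1.trans h2.symm, h2⟩
  · intro f2 B2 hf2 hB2 B1 hB1
    have h1 := key_side2 C1 hC1 lp1 hlp1 C2 hC2 lp2 hlp2 F1 F2 hF1 hF2 f2 hf2 B2 hB2 B1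
      (Set.mem_union_left _ hB1)
    have h2 := key_side2 C1 hC1 lp1 hlp1 C2 hC2 lp2 hlp2 F1 F2 hF1 hF2 f2 hf2 B2 hB2 Set.univ
      (Set.mem_union_right _ (Set.mem_singleton _))
    exact ⟨h1.trans h2.symm, h2⟩

end IPaper
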